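/- arXiv:1509.03380 — 4 statements merged into one kernel-verified Lean document; each statement's English description precedes it below -/
import Mathlib

section
/- For every vertex v of H, the divisor Σ_{w∈V(G)} Div(1_{(w,v)}) on Δ (where 1_{(w,v)}: V(G)×V(H)→ℤ is the indicator function of the vertex (w,v)) equals β(0, L_v), where L_v: V(H)→ℤ is the divisor on H given by L_v(v) = −deg_H(v), L_v(v') = 1 for every neighbor v' of v in H, and L_v(v') = 0 otherwise. -/
open scoped Classical
open Finset

section TriangulatedProduct

variable {VG VH : Type*}

/-- The column of the Laplacian matrix of `G` indexed by the vertex `w`: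
its entry at `v` is `-deg v` if `v = w`, `1` if `v` is adjacent to `w`, and `0` otherwise. -/
noncomputable def lapCol (G : SimpleGraph VG) [Fintype VG] (w v : VG) : ℤ :=
  if v = w then -(((Finset.univ.filter (fun u => G.Adj v u)).card : ℤ))
  else if G.Adj v w then 1 else 0

/-- A divisor on a finite graph is principal if it lies in the ℤ-span of the
columns of the Laplacian matrix of the graph. -/
def GraphPrincipal (G : SimpleGraph VG) [Fintype VG] (D : VG → ℤ) : Prop :=
  ∃ f : VG → ℤ, ∀ v, D v = ∑ w, f w * lapCol G w v

/-- A triangulated product of the graphs `G` and `H`: for each square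
(an edge `aa'` of `G` together with an edge `bb'` of `H`) exactly one of the two
possible diagonals `{(a,b),(a',b')}`, `{(a,b'),(a',b)}` is chosen.  The structure
records the resulting symmetric "diagonal edge" relation. -/
structure TriProd (G : SimpleGraph VG) (H : SimpleGraph VH) where
  diag : VG × VH → VG × VH → Prop
  diag_symm : ∀ u v, diag u v → diag v u
  diag_adj : ∀ a a' b b', diag (a, b) (a', b') → G.Adj a a' ∧ H.Adj b b'
  diag_choice : ∀ a a' b b', G.Adj a a' → H.Adj b b' →
    (diag (a, b) (a', b') ∧ ¬ diag (a, b') (a', b)) ∨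
    (¬ diag (a, b) (a', b') ∧ diag (a, b') (a', b))

namespace TriProd

variable {G : SimpleGraph VG} {H : SimpleGraph VH}

/-- `u` and `v` form an edge of the triangulated product: a horizontal edge,
a vertical edge, or a diagonal edge. -/
def Adj (T : TriProd G H) (u v : VG × VH) : Prop :=
  (u.2 = v.2 ∧ G.Adj u.1 v.1) ∨ (u.1 = v.1 ∧ H.Adj u.2 v.2) ∨ T.diag u v

/-- `{u, v, w}` is a triangle (2-face) of the triangulated product. -/
def IsFace (T : TriProd G H) (u v w : VG × VH) : Prop :=
  ∃ a a' b b', T.diag (a, b) (a', b') ∧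
    ({u, v, w} : Finset (VG × VH)) = {(a, b), (a', b'), (a', b)}

/-- `{u, v, w}` is a triangle of the triangulated product whose diagonal edge
does not contain the vertex `x`. -/
def IsFaceAvoiding (T : TriProd G H) (u v w x : VG × VH) : Prop :=
  ∃ a a' b b', T.diag (a, b) (a', b') ∧
    ({u, v, w} : Finset (VG × VH)) = {(a, b), (a', b'), (a', b)} ∧
    x ≠ (a, b) ∧ x ≠ (a', b')

variable [Fintype VG] [Fintype VH]

/-- The structure constant `α(e, x)` for the edge `e = {u, v}` of the
triangulated product and the vertex `x`. -/
noncomputable def alpha (T : TriProd G H) (u v x : VG × VH) : ℤ :=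
  if x = u ∨ x = v then
    (if T.diag u v then 1
     else ((Finset.univ.filter (fun w => T.IsFaceAvoiding u v w x)).card : ℤ))
  else 0

/-- The divisor of the function `φ`, evaluated at the edge `{u, v}` of the
triangulated product: the sum of `φ` over the third vertices of the triangles
containing `{u, v}`, minus `α({u,v},u) φ(u) + α({u,v},v) φ(v)`. -/
noncomputable def Div (T : TriProd G H) (φ : VG × VH → ℤ) (u v : VG × VH) : ℤ :=
  (∑ w ∈ Finset.univ.filter (fun w => T.IsFace u v w), φ w)
    - (T.alpha u v u * φ u + T.alpha u v v * φ v)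

/-- A divisor on the triangulated product (a function on edges, encoded as a
function on ordered pairs of vertices) is principal if it agrees with `Div φ`
on every edge, for some `φ`. -/
def Principal (T : TriProd G H) (D : VG × VH → VG × VH → ℤ) : Prop :=
  ∃ φ : VG × VH → ℤ, ∀ u v, T.Adj u v → D u v = T.Div φ u v

/-- A divisor on the triangulated product is Cartier if near every vertex `x`
it agrees with a principal divisor on all edges containing `x`. -/
def Cartier (T : TriProd G H) (D : VG × VH → VG × VH → ℤ) : Prop :=
  ∀ x : VG × VH, ∃ φ : VG × VH → ℤ,
    ∀ u v, T.Adj u v → (x = u ∨ x = v) → D u v = T.Div φ u v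

/-- A divisor is ℚ-Cartier if some nonzero integer multiple of it is Cartier. -/
def QCartier (T : TriProd G H) (D : VG × VH → VG × VH → ℤ) : Prop :=
  ∃ m : ℤ, m ≠ 0 ∧ T.Cartier (fun u v => m * D u v)

/-- The balancing conditions for a divisor `D` on the triangulated product. -/
def Balanced (T : TriProd G H) (D : VG × VH → VG × VH → ℤ) : Prop :=
  ∀ a : VG, ∀ b : VH,
    (∀ x x' : VG, G.Adj a x → G.Adj a x' →
      (∑ c ∈ Finset.univ.filter (fun c : VH => T.Adj (a, b) (x, c)), D (a, b) (x, c)) =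
      (∑ c ∈ Finset.univ.filter (fun c : VH => T.Adj (a, b) (x', c)), D (a, b) (x', c))) ∧
    (∀ y y' : VH, H.Adj b y → H.Adj b y' →
      (∑ c ∈ Finset.univ.filter (fun c : VG => T.Adj (a, b) (c, y)), D (a, b) (c, y)) =
      (∑ c ∈ Finset.univ.filter (fun c : VG => T.Adj (a, b) (c, y')), D (a, b) (c, y')))

end TriProd

/-- The map `β` sending a pair of divisors on `G` and `H` to a divisor on the
triangulated product: `C(a)` on vertical edges `{(a,b),(a,b')}`, `D(b)` on
horizontal edges `{(a,b),(a',b)}`, and `0` on diagonal edges. -/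
noncomputable def beta (C : VG → ℤ) (D : VH → ℤ) (u v : VG × VH) : ℤ :=
  if u.1 = v.1 then C u.1 else if u.2 = v.2 then D u.2 else 0

end TriangulatedProduct


section Helpers

lemma triple_eq_iff {α : Type*} [DecidableEq α] {u w t p q r : α}
    (hpq : p ≠ q) (hpr : p ≠ r) (hqr : q ≠ r) :
    ({u, w, t} : Finset α) = {p, q, r} ↔
      (u = p ∧ w = q ∧ t = r) ∨ (u = p ∧ w = r ∧ t = q) ∨
      (u = q ∧ w = p ∧ t = r) ∨ (u = q ∧ w = r ∧ t = p) ∨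
      (u = r ∧ w = p ∧ t = q) ∨ (u = r ∧ w = q ∧ t = p) := by
  constructor
  · intro h
    have hu : u = p ∨ u = q ∨ u = r := by
      have := Finset.ext_iff.mp h u; simpa using this.mp (by simp)
    have hw : w = p ∨ w = q ∨ w = r := by
      have := Finset.ext_iff.mp h w; simpa using this.mp (by simp)
    have ht : t = p ∨ t = q ∨ t = r := by
      have := Finset.ext_iff.mp h t; simpa using this.mp (by simp)
    have hp : p = u ∨ p = w ∨ p = t := by
      have := Finset.ext_iff.mp h p; simpa using this.mpr (by simp)
    have hq : q = u ∨ q = w ∨ q = t := by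
      have := Finset.ext_iff.mp h q; simpa using this.mpr (by simp)
    have hr : r = u ∨ r = w ∨ r = t := by
      have := Finset.ext_iff.mp h r; simpa using this.mpr (by simp)
    rcases hu with hu|hu|hu <;> rcases hw with hw|hw|hw <;> rcases ht with ht|ht|ht <;>
      subst_vars <;> (try simp_all) <;> (try tauto)
  · rintro (⟨h1,h2,h3⟩|⟨h1,h2,h3⟩|⟨h1,h2,h3⟩|⟨h1,h2,h3⟩|⟨h1,h2,h3⟩|⟨h1,h2,h3⟩) <;>
      subst_vars <;> (ext x; simp; try tauto)

namespace TriProd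
variable {VG VH : Type*} {G : SimpleGraph VG} {H : SimpleGraph VH}

lemma tri_ne {c c' : VG} {d d' : VH} (hcc : c ≠ c') (hdd : d ≠ d') :
    ((c,d) : VG × VH) ≠ (c',d') ∧ ((c,d) : VG × VH) ≠ (c',d) ∧ ((c',d') : VG × VH) ≠ (c',d) := by
  refine ⟨?_, ?_, ?_⟩ <;> simp [Prod.ext_iff] <;> tauto

lemma isFaceAvoiding_vert (T : TriProd G H) (a : VG) (b b' : VH) (t x : VG × VH) :
    T.IsFaceAvoiding (a,b) (a,b') t x ↔
      ∃ c, (t = (c,b') ∧ T.diag (c,b') (a,b) ∧ x ≠ (c,b') ∧ x ≠ (a,b)) ∨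
           (t = (c,b) ∧ T.diag (c,b) (a,b') ∧ x ≠ (c,b) ∧ x ≠ (a,b')) := by
  constructor
  · rintro ⟨c, c', d, d', hd, hset, hx1, hx2⟩
    have hadj := T.diag_adj _ _ _ _ hd
    obtain ⟨h1, h2, h3⟩ := tri_ne hadj.1.ne hadj.2.ne
    rw [triple_eq_iff h1 h2 h3] at hset
    rcases hset with ⟨e1,e2,e3⟩|⟨e1,e2,e3⟩|⟨e1,e2,e3⟩|⟨e1,e2,e3⟩|⟨e1,e2,e3⟩|⟨e1,e2,e3⟩ <;>
      rw [Prod.mk.injEq] at e1 e2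
    · exact absurd (e1.1.symm.trans e2.1) hadj.1.ne
    · exact absurd (e1.1.symm.trans e2.1) hadj.1.ne
    · exact absurd (e2.1.symm.trans e1.1) hadj.1.ne
    · obtain ⟨ea, eb⟩ := e1; obtain ⟨-, ec⟩ := e2; subst ea; subst eb; subst ec
      exact ⟨c, Or.inl ⟨e3, hd, hx1, hx2⟩⟩
    · exact absurd (e2.1.symm.trans e1.1) hadj.1.ne
    · obtain ⟨ea, eb⟩ := e1; obtain ⟨-, ec⟩ := e2; subst ea; subst eb; subst ec
      exact ⟨c, Or.inr ⟨e3, hd, hx1, hx2⟩⟩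
  · rintro ⟨c, (⟨ht, hd, hx1, hx2⟩|⟨ht, hd, hx1, hx2⟩)⟩
    · exact ⟨c, a, b', b, hd, by subst ht; ext y; simp; try tauto, hx1, hx2⟩
    · exact ⟨c, a, b, b', hd, by subst ht; ext y; simp; try tauto, hx1, hx2⟩

lemma isFace_vert (T : TriProd G H) (a : VG) (b b' : VH) (t : VG × VH) :
    T.IsFace (a,b) (a,b') t ↔
      ∃ c, (t = (c,b') ∧ T.diag (c,b') (a,b)) ∨ (t = (c,b) ∧ T.diag (c,b) (a,b')) := by
  constructor
  · rintro ⟨c, c', d, d', hd, hset⟩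
    have hadj := T.diag_adj _ _ _ _ hd
    obtain ⟨h1, h2, h3⟩ := tri_ne hadj.1.ne hadj.2.ne
    rw [triple_eq_iff h1 h2 h3] at hset
    rcases hset with ⟨e1,e2,e3⟩|⟨e1,e2,e3⟩|⟨e1,e2,e3⟩|⟨e1,e2,e3⟩|⟨e1,e2,e3⟩|⟨e1,e2,e3⟩ <;>
      rw [Prod.mk.injEq] at e1 e2
    · exact absurd (e1.1.symm.trans e2.1) hadj.1.ne
    · exact absurd (e1.1.symm.trans e2.1) hadj.1.ne
    · exact absurd (e2.1.symm.trans e1.1) hadj.1.ne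
    · obtain ⟨ea, eb⟩ := e1; obtain ⟨-, ec⟩ := e2; subst ea; subst eb; subst ec
      exact ⟨c, Or.inl ⟨e3, hd⟩⟩
    · exact absurd (e2.1.symm.trans e1.1) hadj.1.ne
    · obtain ⟨ea, eb⟩ := e1; obtain ⟨-, ec⟩ := e2; subst ea; subst eb; subst ec
      exact ⟨c, Or.inr ⟨e3, hd⟩⟩
  · rintro ⟨c, (⟨ht, hd⟩|⟨ht, hd⟩)⟩
    · exact ⟨c, a, b', b, hd, by subst ht; ext y; simp; try tauto⟩
    · exact ⟨c, a, b, b', hd, by subst ht; ext y; simp; try tauto⟩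

lemma isFaceAvoiding_horiz (T : TriProd G H) (a a' : VG) (b : VH) (t x : VG × VH) :
    T.IsFaceAvoiding (a,b) (a',b) t x ↔
      ∃ d, (t = (a',d) ∧ T.diag (a,b) (a',d) ∧ x ≠ (a,b) ∧ x ≠ (a',d)) ∨
           (t = (a,d) ∧ T.diag (a,d) (a',b) ∧ x ≠ (a,d) ∧ x ≠ (a',b)) := by
  constructor
  · rintro ⟨c, c', d, d', hd, hset, hx1, hx2⟩
    have hadj := T.diag_adj _ _ _ _ hd
    obtain ⟨h1, h2, h3⟩ := tri_ne hadj.1.ne hadj.2.ne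
    rw [triple_eq_iff h1 h2 h3] at hset
    rcases hset with ⟨e1,e2,e3⟩|⟨e1,e2,e3⟩|⟨e1,e2,e3⟩|⟨e1,e2,e3⟩|⟨e1,e2,e3⟩|⟨e1,e2,e3⟩ <;>
      rw [Prod.mk.injEq] at e1 e2
    · exact absurd (e1.2.symm.trans e2.2) hadj.2.ne
    · obtain ⟨ea, eb⟩ := e1; obtain ⟨ec, -⟩ := e2; subst ea; subst eb; subst ec
      exact ⟨d', Or.inl ⟨e3, hd, hx1, hx2⟩⟩
    · exact absurd (e2.2.symm.trans e1.2) hadj.2.ne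
    · exact absurd (e2.2.symm.trans e1.2) hadj.2.ne
    · obtain ⟨ea, eb⟩ := e1; obtain ⟨ec, -⟩ := e2; subst ea; subst eb; subst ec
      exact ⟨d', Or.inr ⟨e3, T.diag_symm _ _ hd, hx2, hx1⟩⟩
    · exact absurd (e1.2.symm.trans e2.2) hadj.2.ne
  · rintro ⟨d, (⟨ht, hd, hx1, hx2⟩|⟨ht, hd, hx1, hx2⟩)⟩
    · exact ⟨a, a', b, d, hd, by subst ht; ext y; simp; try tauto, hx1, hx2⟩
    · exact ⟨a', a, b, d, T.diag_symm _ _ hd, by subst ht; ext y; simp; try tauto, hx2, hx1⟩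

lemma isFace_horiz (T : TriProd G H) (a a' : VG) (b : VH) (t : VG × VH) :
    T.IsFace (a,b) (a',b) t ↔
      ∃ d, (t = (a',d) ∧ T.diag (a,b) (a',d)) ∨ (t = (a,d) ∧ T.diag (a,d) (a',b)) := by
  constructor
  · rintro ⟨c, c', d, d', hd, hset⟩
    have hadj := T.diag_adj _ _ _ _ hd
    obtain ⟨h1, h2, h3⟩ := tri_ne hadj.1.ne hadj.2.ne
    rw [triple_eq_iff h1 h2 h3] at hset
    rcases hset with ⟨e1,e2,e3⟩|⟨e1,e2,e3⟩|⟨e1,e2,e3⟩|⟨e1,e2,e3⟩|⟨e1,e2,e3⟩|⟨e1,e2,e3⟩ <;>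
      rw [Prod.mk.injEq] at e1 e2
    · exact absurd (e1.2.symm.trans e2.2) hadj.2.ne
    · obtain ⟨ea, eb⟩ := e1; obtain ⟨ec, -⟩ := e2; subst ea; subst eb; subst ec
      exact ⟨d', Or.inl ⟨e3, hd⟩⟩
    · exact absurd (e2.2.symm.trans e1.2) hadj.2.ne
    · exact absurd (e2.2.symm.trans e1.2) hadj.2.ne
    · obtain ⟨ea, eb⟩ := e1; obtain ⟨ec, -⟩ := e2; subst ea; subst eb; subst ec
      exact ⟨d', Or.inr ⟨e3, T.diag_symm _ _ hd⟩⟩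
    · exact absurd (e1.2.symm.trans e2.2) hadj.2.ne
  · rintro ⟨d, (⟨ht, hd⟩|⟨ht, hd⟩)⟩
    · exact ⟨a, a', b, d, hd, by subst ht; ext y; simp; try tauto⟩
    · exact ⟨a', a, b, d, T.diag_symm _ _ hd, by subst ht; ext y; simp; try tauto⟩

lemma isFace_diag (T : TriProd G H) {a a' : VG} {b b' : VH}
    (hd0 : T.diag (a,b) (a',b')) (t : VG × VH) :
    T.IsFace (a,b) (a',b') t ↔ t = (a',b) ∨ t = (a,b') := by
  have hadj0 := T.diag_adj _ _ _ _ hd0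
  constructor
  · rintro ⟨c, c', d, d', hd, hset⟩
    have hadj := T.diag_adj _ _ _ _ hd
    obtain ⟨h1, h2, h3⟩ := tri_ne hadj.1.ne hadj.2.ne
    rw [triple_eq_iff h1 h2 h3] at hset
    rcases hset with ⟨e1,e2,e3⟩|⟨e1,e2,e3⟩|⟨e1,e2,e3⟩|⟨e1,e2,e3⟩|⟨e1,e2,e3⟩|⟨e1,e2,e3⟩ <;>
      rw [Prod.mk.injEq] at e1 e2
    · obtain ⟨ea, eb⟩ := e1; subst ea; subst eb
      obtain ⟨ec, ed⟩ := e2; subst ec; subst ed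
      exact Or.inl e3
    · exact absurd (e1.2.trans e2.2.symm) hadj0.2.ne
    · obtain ⟨ea, eb⟩ := e1; subst ea; subst eb
      obtain ⟨ec, ed⟩ := e2; subst ec; subst ed
      exact Or.inr e3
    · exact absurd (e1.1.trans e2.1.symm) hadj0.1.ne
    · exact absurd (e1.2.trans e2.2.symm) hadj0.2.ne
    · exact absurd (e1.1.trans e2.1.symm) hadj0.1.ne
  · rintro (ht|ht)
    · exact ⟨a, a', b, b', hd0, by subst ht; ext y; simp; try tauto⟩
    · exact ⟨a', a, b', b, T.diag_symm _ _ hd0, by subst ht; ext y; simp; try tauto⟩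

lemma sum_div_indicator [Fintype VG] [Fintype VH] (T : TriProd G H) (v : VH) (u w : VG × VH) :
    (∑ x : VG, T.Div (fun p => if p = (x, v) then 1 else 0) u w) =
      ((univ.filter fun t : VG × VH => T.IsFace u w t ∧ t.2 = v).card : ℤ)
        - ((if u.2 = v then (1:ℤ) else 0) * T.alpha u w u
           + (if w.2 = v then (1:ℤ) else 0) * T.alpha u w w) := by
  have key : ∀ t : VG × VH, (∑ x : VG, if t = (x,v) then (1:ℤ) else 0)
      = if t.2 = v then 1 else 0 := by
    intro t
    by_cases h : t.2 = v
    · rw [if_pos h, Finset.sum_eq_single t.1]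
      · simp [Prod.ext_iff, h]
      · intro x _ hx; rw [if_neg]; simp [Prod.ext_iff]; intro h'; exact fun _ => (hx h'.symm).elim
      · simp
    · rw [if_neg h]; apply Finset.sum_eq_zero; intro x _
      rw [if_neg]; simp [Prod.ext_iff]; tauto
  unfold TriProd.Div
  rw [Finset.sum_sub_distrib]
  congr 1
  · rw [Finset.sum_comm]
    rw [Finset.sum_congr rfl (fun t _ => key t), Finset.sum_boole, Finset.filter_filter]
  · rw [Finset.sum_add_distrib]
    congr 1
    · rw [← Finset.mul_sum, key u, mul_comm]
    · rw [← Finset.mul_sum, key w, mul_comm]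

lemma alpha_left [Fintype VG] [Fintype VH] (T : TriProd G H) {u w : VG × VH}
    (hnd : ¬ T.diag u w) :
    T.alpha u w u = ((univ.filter fun t => T.IsFaceAvoiding u w t u).card : ℤ) := by
  unfold TriProd.alpha
  rw [if_pos (Or.inl rfl), if_neg hnd]

lemma alpha_right [Fintype VG] [Fintype VH] (T : TriProd G H) {u w : VG × VH}
    (hnd : ¬ T.diag u w) :
    T.alpha u w w = ((univ.filter fun t => T.IsFaceAvoiding u w t w).card : ℤ) := by
  unfold TriProd.alpha
  rw [if_pos (Or.inr rfl), if_neg hnd]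

lemma alpha_diag_left [Fintype VG] [Fintype VH] (T : TriProd G H) {u w : VG × VH}
    (hd : T.diag u w) : T.alpha u w u = 1 := by
  unfold TriProd.alpha
  rw [if_pos (Or.inl rfl), if_pos hd]

lemma alpha_diag_right [Fintype VG] [Fintype VH] (T : TriProd G H) {u w : VG × VH}
    (hd : T.diag u w) : T.alpha u w w = 1 := by
  unfold TriProd.alpha
  rw [if_pos (Or.inr rfl), if_pos hd]

end TriProd

end Helpers

/-- For every vertex `v` of `H`, the divisor
`Σ_{w ∈ V(G)} Div(1_{(w,v)})` on the triangulated product `Δ` equals `β(0, L_v)`,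
where `L_v` is the column of the Laplacian matrix of `H` indexed by `v`. -/
theorem sum_indicator_div_eq_beta {VG VH : Type*} [Fintype VG] [Fintype VH]
    (G : SimpleGraph VG) (H : SimpleGraph VH)
    (hG : G.Connected) (hH : H.Connected)
    (hGe : ∃ a a', G.Adj a a') (hHe : ∃ b b', H.Adj b b')
    (T : TriProd G H)
    (v : VH) :
    ∀ u w : VG × VH, T.Adj u w →
      (∑ x : VG, T.Div (fun p => if p = (x, v) then 1 else 0) u w) =
        beta (fun _ => (0 : ℤ)) (lapCol H v) u w := by
  rintro ⟨a, b⟩ ⟨a', b'⟩ hadj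
  rw [T.sum_div_indicator v]
  rcases hadj with ⟨hb, hG'⟩ | ⟨ha, hH'⟩ | hd
  · -- horizontal edge
    simp only at hb hG'
    subst hb
    have hbeta : beta (fun _ => (0 : ℤ)) (lapCol H v) (a, b) (a', b) = lapCol H v b := by
      simp [beta, hG'.ne]
    rw [hbeta]
    have hnd : ¬ T.diag (a, b) (a', b) := fun h => ((T.diag_adj _ _ _ _ h).2).ne rfl
    by_cases hbv : b = v
    · subst hbv
      -- S is empty
      have hS : (univ.filter fun t : VG × VH => T.IsFace (a, b) (a', b) t ∧ t.2 = b) = ∅ := by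
        ext t
        simp only [mem_filter, mem_univ, true_and, Finset.notMem_empty, iff_false, not_and]
        rintro h h2
        rw [T.isFace_horiz] at h
        obtain ⟨d, (⟨rfl, hd2⟩|⟨rfl, hd2⟩)⟩ := h
        · simp only at h2; subst h2
          exact H.irrefl (T.diag_adj _ _ _ _ hd2).2
        · simp only at h2; subst h2
          exact H.irrefl (T.diag_adj _ _ _ _ hd2).2
      have hinj1 : Function.Injective (fun d : VH => ((a, d) : VG × VH)) := by
        intro d1 d2 h; exact (Prod.ext_iff.mp h).2
      have hinj2 : Function.Injective (fun d : VH => ((a', d) : VG × VH)) := by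
        intro d1 d2 h; exact (Prod.ext_iff.mp h).2
      have hAu : (univ.filter fun t => T.IsFaceAvoiding (a, b) (a', b) t (a, b))
          = (univ.filter fun d => T.diag (a, d) (a', b)).image (fun d => (a, d)) := by
        ext t
        simp only [mem_filter, mem_univ, true_and, Finset.mem_image, T.isFaceAvoiding_horiz]
        constructor
        · rintro ⟨d, (⟨rfl, hd2, hx1, hx2⟩|⟨rfl, hd2, hx1, hx2⟩)⟩
          · exact absurd rfl hx1
          · exact ⟨d, hd2, rfl⟩
        · rintro ⟨d, hd2, rfl⟩
          refine ⟨d, Or.inr ⟨rfl, hd2, ?_, ?_⟩⟩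
          · simp only [ne_eq, Prod.mk.injEq, not_and]
            exact fun _ => ((T.diag_adj _ _ _ _ hd2).2).ne.symm
          · simp only [ne_eq, Prod.mk.injEq, not_and]
            exact fun h => absurd h hG'.ne
        
      have hAw : (univ.filter fun t => T.IsFaceAvoiding (a, b) (a', b) t (a', b))
          = (univ.filter fun d => T.diag (a, b) (a', d)).image (fun d => (a', d)) := by
        ext t
        simp only [mem_filter, mem_univ, true_and, Finset.mem_image, T.isFaceAvoiding_horiz]
        constructor
        · rintro ⟨d, (⟨rfl, hd2, hx1, hx2⟩|⟨rfl, hd2, hx1, hx2⟩)⟩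
          · exact ⟨d, hd2, rfl⟩
          · exact absurd rfl hx2
        · rintro ⟨d, hd2, rfl⟩
          refine ⟨d, Or.inl ⟨rfl, hd2, ?_, ?_⟩⟩
          · simp only [ne_eq, Prod.mk.injEq, not_and]
            exact fun h => absurd h.symm hG'.ne
          · simp only [ne_eq, Prod.mk.injEq, not_and]
            exact fun _ => ((T.diag_adj _ _ _ _ hd2).2).ne
      have hsplit1 : (univ.filter fun d => T.diag (a, d) (a', b))
          = (univ.filter fun d => H.Adj b d).filter (fun d => T.diag (a, d) (a', b)) := by
        ext d
        simp only [mem_filter, mem_univ, true_and]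
        exact ⟨fun h => ⟨((T.diag_adj _ _ _ _ h).2).symm, h⟩, fun h => h.2⟩
      have hsplit2 : (univ.filter fun d => T.diag (a, b) (a', d))
          = (univ.filter fun d => H.Adj b d).filter (fun d => ¬ T.diag (a, d) (a', b)) := by
        ext d
        simp only [mem_filter, mem_univ, true_and]
        constructor
        · intro h
          have hbd : H.Adj b d := (T.diag_adj _ _ _ _ h).2
          rcases T.diag_choice a a' b d hG' hbd with ⟨h1, h2⟩ | ⟨h1, h2⟩
          · exact ⟨hbd, fun hc => h2 hc⟩
          · exact absurd h h1
        · rintro ⟨hbd, hnp⟩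
          rcases T.diag_choice a a' b d hG' hbd with ⟨h1, h2⟩ | ⟨h1, h2⟩
          · exact h1
          · exact absurd h2 hnp
      have hcards := Finset.card_filter_add_card_filter_not
        (s := univ.filter fun d => H.Adj b d) (p := fun d => T.diag (a, d) (a', b))
      rw [hS, T.alpha_left hnd, T.alpha_right hnd, hAu, hAw,
        Finset.card_image_of_injective _ hinj1, Finset.card_image_of_injective _ hinj2,
        hsplit1, hsplit2]
      rw [lapCol, if_pos rfl]
      have hNeq : (univ.filter fun d => H.Adj b d) = (univ.filter fun u_1 => H.Adj b u_1) := rfl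
      simp only [if_pos rfl, Finset.card_empty]
      push_cast [← hcards]
      ring
    · -- b ≠ v
      rw [lapCol, if_neg hbv]
      rw [if_neg (show ¬((a, b).2 = v) from hbv)]
      by_cases hbadj : H.Adj b v
      · rw [if_pos hbadj]
        rcases T.diag_choice a a' b v hG' hbadj with ⟨h1, h2⟩ | ⟨h1, h2⟩
        · have hS : (univ.filter fun t : VG × VH => T.IsFace (a, b) (a', b) t ∧ t.2 = v)
              = {(a', v)} := by
            ext t
            simp only [mem_filter, mem_univ, true_and, Finset.mem_singleton, T.isFace_horiz]
            constructor
            · rintro ⟨⟨d, (⟨rfl, hd2⟩|⟨rfl, hd2⟩)⟩, h2'⟩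
              · simp only at h2'; subst h2'; rfl
              · simp only at h2'; subst h2'; exact absurd hd2 h2
            · rintro rfl
              exact ⟨⟨v, Or.inl ⟨rfl, h1⟩⟩, rfl⟩
          rw [hS]
          norm_num
        · have hS : (univ.filter fun t : VG × VH => T.IsFace (a, b) (a', b) t ∧ t.2 = v)
              = {(a, v)} := by
            ext t
            simp only [mem_filter, mem_univ, true_and, Finset.mem_singleton, T.isFace_horiz]
            constructor
            · rintro ⟨⟨d, (⟨rfl, hd2⟩|⟨rfl, hd2⟩)⟩, h2'⟩
              · simp only at h2'; subst h2'; exact absurd hd2 h1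
              · simp only at h2'; subst h2'; rfl
            · rintro rfl
              exact ⟨⟨v, Or.inr ⟨rfl, h2⟩⟩, rfl⟩
          rw [hS]
          norm_num
      · rw [if_neg hbadj]
        have hS : (univ.filter fun t : VG × VH => T.IsFace (a, b) (a', b) t ∧ t.2 = v) = ∅ := by
          ext t
          simp only [mem_filter, mem_univ, true_and, Finset.notMem_empty, iff_false, not_and]
          rintro h h2
          rw [T.isFace_horiz] at h
          obtain ⟨d, (⟨rfl, hd2⟩|⟨rfl, hd2⟩)⟩ := h
          · simp only at h2; subst h2
            exact hbadj (T.diag_adj _ _ _ _ hd2).2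
          · simp only at h2; subst h2
            exact hbadj ((T.diag_adj _ _ _ _ hd2).2).symm
        rw [hS]
        norm_num
  · -- vertical edge
    simp only at ha hH'
    subst ha
    have hbeta : beta (fun _ => (0 : ℤ)) (lapCol H v) (a, b) (a, b') = 0 := by
      simp [beta]
    rw [hbeta]
    have hnd : ¬ T.diag (a, b) (a, b') := fun h => ((T.diag_adj _ _ _ _ h).1).ne rfl
    by_cases hbv : b = v
    · subst hbv
      have hb'v : b' ≠ b := hH'.ne.symm
      have hS : (univ.filter fun t : VG × VH => T.IsFace (a, b) (a, b') t ∧ t.2 = b)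
          = (univ.filter fun t => T.IsFaceAvoiding (a, b) (a, b') t (a, b)) := by
        ext t
        simp only [mem_filter, mem_univ, true_and, T.isFace_vert, T.isFaceAvoiding_vert]
        constructor
        · rintro ⟨⟨c, (⟨rfl, hd2⟩|⟨rfl, hd2⟩)⟩, h2⟩
          · simp only at h2; exact absurd h2 hb'v
          · have hca : c ≠ a := ((T.diag_adj _ _ _ _ hd2).1).ne
            refine ⟨c, Or.inr ⟨rfl, hd2, ?_, ?_⟩⟩
            · simp only [ne_eq, Prod.mk.injEq, not_and]
              exact fun h => absurd h.symm hca
            · simp only [ne_eq, Prod.mk.injEq, not_and]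
              exact fun _ => hb'v.symm
        · rintro ⟨c, (⟨rfl, hd2, hx1, hx2⟩|⟨rfl, hd2, hx1, hx2⟩)⟩
          · exact absurd rfl hx2
          · exact ⟨⟨c, Or.inr ⟨rfl, hd2⟩⟩, rfl⟩
      rw [hS, T.alpha_left hnd, if_pos rfl, if_neg (show ¬((a, b').2 = b) from hb'v)]
      ring
    · by_cases hb'v : b' = v
      · subst hb'v
        have hbv' : b ≠ b' := hH'.ne
        have hS : (univ.filter fun t : VG × VH => T.IsFace (a, b) (a, b') t ∧ t.2 = b')
            = (univ.filter fun t => T.IsFaceAvoiding (a, b) (a, b') t (a, b')) := by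
          ext t
          simp only [mem_filter, mem_univ, true_and, T.isFace_vert, T.isFaceAvoiding_vert]
          constructor
          · rintro ⟨⟨c, (⟨rfl, hd2⟩|⟨rfl, hd2⟩)⟩, h2⟩
            · have hca : c ≠ a := ((T.diag_adj _ _ _ _ hd2).1).ne
              refine ⟨c, Or.inl ⟨rfl, hd2, ?_, ?_⟩⟩
              · simp only [ne_eq, Prod.mk.injEq, not_and]
                exact fun h => absurd h.symm hca
              · simp only [ne_eq, Prod.mk.injEq, not_and]
                exact fun _ => hbv'.symm
            · simp only at h2; exact absurd h2 hbv'
          · rintro ⟨c, (⟨rfl, hd2, hx1, hx2⟩|⟨rfl, hd2, hx1, hx2⟩)⟩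
            · exact ⟨⟨c, Or.inl ⟨rfl, hd2⟩⟩, rfl⟩
            · exact absurd rfl hx2
        rw [hS, T.alpha_right hnd, if_pos rfl, if_neg (show ¬((a, b).2 = b') from hbv')]
        ring
      · have hS : (univ.filter fun t : VG × VH => T.IsFace (a, b) (a, b') t ∧ t.2 = v) = ∅ := by
          ext t
          simp only [mem_filter, mem_univ, true_and, Finset.notMem_empty, iff_false, not_and]
          rintro h h2
          rw [T.isFace_vert] at h
          obtain ⟨c, (⟨rfl, hd2⟩|⟨rfl, hd2⟩)⟩ := h
          · simp only at h2; exact hb'v h2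
          · simp only at h2; exact hbv h2
        rw [hS, if_neg (show ¬((a, b).2 = v) from hbv), if_neg (show ¬((a, b').2 = v) from hb'v)]
        norm_num
  · -- diagonal edge
    have hadj := T.diag_adj a a' b b' hd
    have hbeta : beta (fun _ => (0 : ℤ)) (lapCol H v) (a, b) (a', b') = 0 := by
      simp [beta, hadj.1.ne, hadj.2.ne]
    rw [hbeta, T.alpha_diag_left hd, T.alpha_diag_right hd]
    by_cases hbv : b = v
    · subst hbv
      have hb'v : b' ≠ b := hadj.2.ne.symm
      have hS : (univ.filter fun t : VG × VH => T.IsFace (a, b) (a', b') t ∧ t.2 = b)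
          = {(a', b)} := by
        ext t
        simp only [mem_filter, mem_univ, true_and, Finset.mem_singleton, T.isFace_diag hd]
        constructor
        · rintro ⟨(rfl|rfl), h2⟩
          · rfl
          · simp only at h2; exact absurd h2 hb'v
        · rintro rfl
          exact ⟨Or.inl rfl, rfl⟩
      rw [hS, if_pos rfl, if_neg (show ¬((a', b').2 = b) from hb'v)]
      norm_num
    · by_cases hb'v : b' = v
      · subst hb'v
        have hbv' : b ≠ b' := hadj.2.ne
        have hS : (univ.filter fun t : VG × VH => T.IsFace (a, b) (a', b') t ∧ t.2 = b')
            = {(a, b')} := by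
          ext t
          simp only [mem_filter, mem_univ, true_and, Finset.mem_singleton, T.isFace_diag hd]
          constructor
          · rintro ⟨(rfl|rfl), h2⟩
            · simp only at h2; exact absurd h2 hbv'
            · rfl
          · rintro rfl
            exact ⟨Or.inr rfl, rfl⟩
        rw [hS, if_neg (show ¬((a, b).2 = b') from hbv'), if_pos rfl]
        norm_num
      · have hS : (univ.filter fun t : VG × VH => T.IsFace (a, b) (a', b') t ∧ t.2 = v) = ∅ := by
          ext t
          simp only [mem_filter, mem_univ, true_and, Finset.notMem_empty, iff_false, not_and]
          rintro h h2
          rcases (T.isFace_diag hd t).mp h with rfl | rfl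
          · simp only at h2; exact hbv h2
          · simp only at h2; exact hb'v h2
        rw [hS, if_neg (show ¬((a, b).2 = v) from hbv), if_neg (show ¬((a', b').2 = v) from hb'v)]
        norm_num
end

section
/- A divisor P on the triangulated product Δ lies in the image of β if and only if P is Cartier and P(e) = 0 for every diagonal edge e of Δ. -/
open scoped Classical
open Finset

section AuxLemmas

open TriProd

variable {VG VH : Type*} {G : SimpleGraph VG} {H : SimpleGraph VH}

lemma TriProd.diag_ne (T : TriProd G H) {u v : VG × VH} (h : T.diag u v) :
    u.1 ≠ v.1 ∧ u.2 ≠ v.2 := by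
  have := T.diag_adj u.1 v.1 u.2 v.2 h
  exact ⟨this.1.ne, this.2.ne⟩

lemma TriProd.diag_iff_not (T : TriProd G H) {a a' : VG} {b b' : VH}
    (ha : G.Adj a a') (hb : H.Adj b b') :
    T.diag (a,b') (a',b) ↔ ¬ T.diag (a,b) (a',b') := by
  rcases T.diag_choice a a' b b' ha hb with ⟨h1,h2⟩|⟨h1,h2⟩ <;> tauto

lemma isFace_vert_iff (T : TriProd G H) {a : VG} {b b' : VH} (hb : H.Adj b b') (w : VG × VH) :
    T.IsFace (a,b) (a,b') w ↔
      (∃ a', T.diag (a,b) (a',b') ∧ w = (a',b')) ∨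
      (∃ a', T.diag (a,b') (a',b) ∧ w = (a',b)) := by
  have hbb' : b ≠ b' := hb.ne
  constructor
  · rintro ⟨A,A',B,B',hd,hset⟩
    have hAA' : A ≠ A' := (T.diag_adj _ _ _ _ hd).1.ne
    have hBB' : B ≠ B' := (T.diag_adj _ _ _ _ hd).2.ne
    have h1 : ((a,b) : VG × VH) ∈ ({(A,B),(A',B'),(A',B)} : Finset (VG × VH)) := by
      rw [← hset]; simp
    have h2 : ((a,b') : VG × VH) ∈ ({(A,B),(A',B'),(A',B)} : Finset (VG × VH)) := by
      rw [← hset]; simp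
    have h3 : ((A,B) : VG × VH) ∈ ({(a,b),(a,b'),w} : Finset (VG × VH)) := by
      rw [hset]; simp
    simp only [Finset.mem_insert, Finset.mem_singleton, Prod.mk.injEq] at h1 h2 h3
    rcases h1 with ⟨e1, e2⟩ | ⟨e1, e2⟩ | ⟨e1, e2⟩ <;> subst e1 <;> subst e2
    · rcases h2 with ⟨-, h⟩ | ⟨h, -⟩ | ⟨h, -⟩
      · exact absurd h (Ne.symm hbb')
      · exact absurd h hAA'
      · exact absurd h hAA'
    · rcases h2 with ⟨h, -⟩ | ⟨-, h⟩ | ⟨-, h⟩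
      · exact absurd h (Ne.symm hAA')
      · exact absurd h (Ne.symm hbb')
      · subst h
        rcases h3 with ⟨h', -⟩ | ⟨h', -⟩ | h'
        · exact absurd h' hAA'
        · exact absurd h' hAA'
        · exact Or.inl ⟨A, T.diag_symm _ _ hd, h'.symm⟩
    · rcases h2 with ⟨h, -⟩ | ⟨-, h⟩ | ⟨-, h⟩
      · exact absurd h (Ne.symm hAA')
      · subst h
        rcases h3 with ⟨h', -⟩ | ⟨h', -⟩ | h'
        · exact absurd h' hAA'
        · exact absurd h' hAA'
        · exact Or.inr ⟨A, T.diag_symm _ _ hd, h'.symm⟩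
      · exact absurd h (Ne.symm hbb')
  · rintro (⟨a', hd, rfl⟩ | ⟨a', hd, rfl⟩)
    · exact ⟨a', a, b', b, T.diag_symm _ _ hd, by ext x; simp; tauto⟩
    · exact ⟨a', a, b, b', T.diag_symm _ _ hd, by ext x; simp; tauto⟩


lemma isFaceAvoiding_vert_iff (T : TriProd G H) {a : VG} {b b' : VH} (hb : H.Adj b b')
    (w x : VG × VH) :
    T.IsFaceAvoiding (a,b) (a,b') w x ↔
      (∃ a', T.diag (a,b) (a',b') ∧ w = (a',b') ∧ x ≠ (a,b) ∧ x ≠ (a',b')) ∨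
      (∃ a', T.diag (a,b') (a',b) ∧ w = (a',b) ∧ x ≠ (a,b') ∧ x ≠ (a',b)) := by
  have hbb' : b ≠ b' := hb.ne
  constructor
  · rintro ⟨A,A',B,B',hd,hset,hx1,hx2⟩
    have hAA' : A ≠ A' := (T.diag_adj _ _ _ _ hd).1.ne
    have hBB' : B ≠ B' := (T.diag_adj _ _ _ _ hd).2.ne
    have h1 : ((a,b) : VG × VH) ∈ ({(A,B),(A',B'),(A',B)} : Finset (VG × VH)) := by
      rw [← hset]; simp
    have h2 : ((a,b') : VG × VH) ∈ ({(A,B),(A',B'),(A',B)} : Finset (VG × VH)) := by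
      rw [← hset]; simp
    have h3 : ((A,B) : VG × VH) ∈ ({(a,b),(a,b'),w} : Finset (VG × VH)) := by
      rw [hset]; simp
    simp only [Finset.mem_insert, Finset.mem_singleton, Prod.mk.injEq] at h1 h2 h3
    rcases h1 with ⟨e1, e2⟩ | ⟨e1, e2⟩ | ⟨e1, e2⟩ <;> subst e1 <;> subst e2
    · rcases h2 with ⟨-, h⟩ | ⟨h, -⟩ | ⟨h, -⟩
      · exact absurd h (Ne.symm hbb')
      · exact absurd h hAA'
      · exact absurd h hAA'
    · rcases h2 with ⟨h, -⟩ | ⟨-, h⟩ | ⟨-, h⟩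
      · exact absurd h (Ne.symm hAA')
      · exact absurd h (Ne.symm hbb')
      · subst h
        rcases h3 with ⟨h', -⟩ | ⟨h', -⟩ | h'
        · exact absurd h' hAA'
        · exact absurd h' hAA'
        · exact Or.inl ⟨A, T.diag_symm _ _ hd, h'.symm, hx2, hx1⟩
    · rcases h2 with ⟨h, -⟩ | ⟨-, h⟩ | ⟨-, h⟩
      · exact absurd h (Ne.symm hAA')
      · subst h
        rcases h3 with ⟨h', -⟩ | ⟨h', -⟩ | h'
        · exact absurd h' hAA'
        · exact absurd h' hAA'
        · exact Or.inr ⟨A, T.diag_symm _ _ hd, h'.symm, hx2, hx1⟩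
      · exact absurd h (Ne.symm hbb')
  · rintro (⟨a', hd, rfl, hx1, hx2⟩ | ⟨a', hd, rfl, hx1, hx2⟩)
    · exact ⟨a', a, b', b, T.diag_symm _ _ hd, by ext x; simp; tauto, hx2, hx1⟩
    · exact ⟨a', a, b, b', T.diag_symm _ _ hd, by ext x; simp; tauto, hx2, hx1⟩

lemma isFace_horiz_iff (T : TriProd G H) {a a' : VG} {b : VH} (ha : G.Adj a a') (w : VG × VH) :
    T.IsFace (a,b) (a',b) w ↔
      (∃ b', T.diag (a,b) (a',b') ∧ w = (a',b')) ∨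
      (∃ b', T.diag (a,b') (a',b) ∧ w = (a,b')) := by
  have haa' : a ≠ a' := ha.ne
  constructor
  · rintro ⟨A,A',B,B',hd,hset⟩
    have hAA' : A ≠ A' := (T.diag_adj _ _ _ _ hd).1.ne
    have hBB' : B ≠ B' := (T.diag_adj _ _ _ _ hd).2.ne
    have h1 : ((a,b) : VG × VH) ∈ ({(A,B),(A',B'),(A',B)} : Finset (VG × VH)) := by
      rw [← hset]; simp
    have h2 : ((a',b) : VG × VH) ∈ ({(A,B),(A',B'),(A',B)} : Finset (VG × VH)) := by
      rw [← hset]; simp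
    have h3 : ((A',B') : VG × VH) ∈ ({(a,b),(a',b),w} : Finset (VG × VH)) := by
      rw [hset]; simp
    simp only [Finset.mem_insert, Finset.mem_singleton, Prod.mk.injEq] at h1 h2 h3
    rcases h1 with ⟨e1, e2⟩ | ⟨e1, e2⟩ | ⟨e1, e2⟩ <;> subst e1 <;> subst e2
    · -- A = a, B = b
      rcases h2 with ⟨h, -⟩ | ⟨-, h⟩ | ⟨h, -⟩
      · exact absurd h (Ne.symm haa')
      · exact absurd h hBB'
      · subst h
        rcases h3 with ⟨h', -⟩ | ⟨-, h''⟩ | h'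
        · exact absurd h' (Ne.symm haa')
        · exact absurd h'' (Ne.symm hBB')
        · exact Or.inl ⟨B', hd, h'.symm⟩
    · -- A' = a, B' = b
      rcases h2 with ⟨h, h'⟩ | ⟨h, -⟩ | ⟨h, -⟩
      · subst h; exact absurd h' (Ne.symm hBB')
      · exact absurd h (Ne.symm haa')
      · exact absurd h (Ne.symm haa')
    · -- A' = a, B = b
      rcases h2 with ⟨h, -⟩ | ⟨-, h⟩ | ⟨h, -⟩
      · subst h
        rcases h3 with ⟨-, h'⟩ | ⟨h', -⟩ | h'
        · exact absurd h' (Ne.symm hBB')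
        · exact absurd h' haa'
        · exact Or.inr ⟨B', T.diag_symm _ _ hd, h'.symm⟩
      · exact absurd h hBB'
      · exact absurd h (Ne.symm haa')
  · rintro (⟨b', hd, rfl⟩ | ⟨b', hd, rfl⟩)
    · exact ⟨a, a', b, b', hd, by ext x; simp; tauto⟩
    · exact ⟨a', a, b, b', T.diag_symm _ _ hd, by ext x; simp; tauto⟩

lemma isFaceAvoiding_horiz_iff (T : TriProd G H) {a a' : VG} {b : VH} (ha : G.Adj a a')
    (w x : VG × VH) :
    T.IsFaceAvoiding (a,b) (a',b) w x ↔
      (∃ b', T.diag (a,b) (a',b') ∧ w = (a',b') ∧ x ≠ (a,b) ∧ x ≠ (a',b')) ∨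
      (∃ b', T.diag (a,b') (a',b) ∧ w = (a,b') ∧ x ≠ (a,b') ∧ x ≠ (a',b)) := by
  have haa' : a ≠ a' := ha.ne
  constructor
  · rintro ⟨A,A',B,B',hd,hset,hx1,hx2⟩
    have hAA' : A ≠ A' := (T.diag_adj _ _ _ _ hd).1.ne
    have hBB' : B ≠ B' := (T.diag_adj _ _ _ _ hd).2.ne
    have h1 : ((a,b) : VG × VH) ∈ ({(A,B),(A',B'),(A',B)} : Finset (VG × VH)) := by
      rw [← hset]; simp
    have h2 : ((a',b) : VG × VH) ∈ ({(A,B),(A',B'),(A',B)} : Finset (VG × VH)) := by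
      rw [← hset]; simp
    have h3 : ((A',B') : VG × VH) ∈ ({(a,b),(a',b),w} : Finset (VG × VH)) := by
      rw [hset]; simp
    simp only [Finset.mem_insert, Finset.mem_singleton, Prod.mk.injEq] at h1 h2 h3
    rcases h1 with ⟨e1, e2⟩ | ⟨e1, e2⟩ | ⟨e1, e2⟩ <;> subst e1 <;> subst e2
    · rcases h2 with ⟨h, -⟩ | ⟨-, h⟩ | ⟨h, -⟩
      · exact absurd h (Ne.symm haa')
      · exact absurd h hBB'
      · subst h
        rcases h3 with ⟨h', -⟩ | ⟨-, h''⟩ | h'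
        · exact absurd h' (Ne.symm haa')
        · exact absurd h'' (Ne.symm hBB')
        · exact Or.inl ⟨B', hd, h'.symm, hx1, hx2⟩
    · rcases h2 with ⟨h, h'⟩ | ⟨h, -⟩ | ⟨h, -⟩
      · subst h; exact absurd h' (Ne.symm hBB')
      · exact absurd h (Ne.symm haa')
      · exact absurd h (Ne.symm haa')
    · rcases h2 with ⟨h, -⟩ | ⟨-, h⟩ | ⟨h, -⟩
      · subst h
        rcases h3 with ⟨-, h'⟩ | ⟨h', -⟩ | h'
        · exact absurd h' (Ne.symm hBB')
        · exact absurd h' haa'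
        · exact Or.inr ⟨B', T.diag_symm _ _ hd, h'.symm, hx2, hx1⟩
      · exact absurd h hBB'
      · exact absurd h (Ne.symm haa')
  · rintro (⟨b', hd, rfl, hx1, hx2⟩ | ⟨b', hd, rfl, hx1, hx2⟩)
    · exact ⟨a, a', b, b', hd, by ext x; simp; tauto, hx1, hx2⟩
    · exact ⟨a', a, b, b', T.diag_symm _ _ hd, by ext x; simp; tauto, hx2, hx1⟩

lemma isFace_diag_iff (T : TriProd G H) {a a' : VG} {b b' : VH}
    (hd : T.diag (a,b) (a',b')) (w : VG × VH) :
    T.IsFace (a,b) (a',b') w ↔ w = (a',b) ∨ w = (a,b') := by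
  have haa' : a ≠ a' := (T.diag_adj _ _ _ _ hd).1.ne
  have hbb' : b ≠ b' := (T.diag_adj _ _ _ _ hd).2.ne
  constructor
  · rintro ⟨A,A',B,B',hd',hset⟩
    have hAA' : A ≠ A' := (T.diag_adj _ _ _ _ hd').1.ne
    have hBB' : B ≠ B' := (T.diag_adj _ _ _ _ hd').2.ne
    have h1 : ((a,b) : VG × VH) ∈ ({(A,B),(A',B'),(A',B)} : Finset (VG × VH)) := by
      rw [← hset]; simp
    have h2 : ((a',b') : VG × VH) ∈ ({(A,B),(A',B'),(A',B)} : Finset (VG × VH)) := by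
      rw [← hset]; simp
    simp only [Finset.mem_insert, Finset.mem_singleton, Prod.mk.injEq] at h1 h2
    rcases h1 with ⟨e1, e2⟩ | ⟨e1, e2⟩ | ⟨e1, e2⟩ <;> subst e1 <;> subst e2
    · rcases h2 with ⟨h, -⟩ | ⟨e3, e4⟩ | ⟨-, h⟩
      · exact absurd h (Ne.symm haa')
      · subst e3; subst e4
        have h3 : ((a',b) : VG × VH) ∈ ({(a,b),(a',b'),w} : Finset (VG × VH)) := by
          rw [hset]; simp
        simp only [Finset.mem_insert, Finset.mem_singleton, Prod.mk.injEq] at h3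
        rcases h3 with ⟨h', -⟩ | ⟨-, h'⟩ | h'
        · exact absurd h' (Ne.symm haa')
        · exact absurd h' hbb'
        · exact Or.inl h'.symm
      · exact absurd h (Ne.symm hbb')
    · rcases h2 with ⟨e3, e4⟩ | ⟨h, -⟩ | ⟨h, -⟩
      · subst e3; subst e4
        have h3 : ((a,b') : VG × VH) ∈ ({(a,b),(a',b'),w} : Finset (VG × VH)) := by
          rw [hset]; simp
        simp only [Finset.mem_insert, Finset.mem_singleton, Prod.mk.injEq] at h3
        rcases h3 with ⟨-, h'⟩ | ⟨h', -⟩ | h'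
        · exact absurd h' (Ne.symm hbb')
        · exact absurd h' haa'
        · exact Or.inr h'.symm
      · exact absurd h (Ne.symm haa')
      · exact absurd h (Ne.symm haa')
    · rcases h2 with ⟨-, h⟩ | ⟨h, -⟩ | ⟨h, -⟩
      · exact absurd h (Ne.symm hbb')
      · exact absurd h (Ne.symm haa')
      · exact absurd h (Ne.symm haa')
  · rintro (rfl | rfl)
    · exact ⟨a, a', b, b', hd, rfl⟩
    · exact ⟨a', a, b', b, T.diag_symm _ _ hd, by ext x; simp; tauto⟩

variable [Fintype VG] [Fintype VH]

lemma div_diag (T : TriProd G H) (φ : VG × VH → ℤ) {a a' : VG} {b b' : VH}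
    (hd : T.diag (a,b) (a',b')) :
    T.Div φ (a,b) (a',b') = φ (a',b) + φ (a,b') - (φ (a,b) + φ (a',b')) := by
  have haa' : a ≠ a' := (T.diag_adj _ _ _ _ hd).1.ne
  have hset : Finset.univ.filter (fun w => T.IsFace (a,b) (a',b') w)
      = ({(a',b),(a,b')} : Finset (VG × VH)) := by
    ext w
    simp [isFace_diag_iff T hd]
  have hne : ((a',b) : VG × VH) ≠ (a,b') := by
    intro h; exact haa' (congrArg Prod.fst h).symm
  have h1 : T.alpha (a,b) (a',b') (a,b) = 1 := by
    rw [TriProd.alpha, if_pos (Or.inl rfl), if_pos hd]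
  have h2 : T.alpha (a,b) (a',b') (a',b') = 1 := by
    rw [TriProd.alpha, if_pos (Or.inr rfl), if_pos hd]
  rw [TriProd.Div, hset, Finset.sum_pair hne, h1, h2]
  ring

lemma div_vert (T : TriProd G H) (φ : VG × VH → ℤ) {a : VG} {b b' : VH} (hb : H.Adj b b') :
    T.Div φ (a,b) (a,b') =
      ∑ a' ∈ Finset.univ.filter (fun a' => G.Adj a a'),
        (if T.diag (a,b) (a',b') then φ (a',b') - φ (a,b') else φ (a',b) - φ (a,b)) := by
  have hbb' : b ≠ b' := hb.ne
  have hndiag : ¬ T.diag (a,b) (a,b') := fun h => (T.diag_adj _ _ _ _ h).1.ne rfl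
  set N := Finset.univ.filter (fun a' => G.Adj a a') with hN
  -- the faces
  have hface : Finset.univ.filter (fun w => T.IsFace (a,b) (a,b') w)
      = N.image (fun a' => if T.diag (a,b) (a',b') then ((a',b') : VG × VH) else (a',b)) := by
    ext w
    simp only [Finset.mem_filter, Finset.mem_univ, true_and, Finset.mem_image,
      isFace_vert_iff T hb, hN]
    constructor
    · rintro (⟨a', hd, rfl⟩ | ⟨a', hd, rfl⟩)
      · exact ⟨a', by simp [(T.diag_adj _ _ _ _ hd).1], by simp [hd]⟩
      · refine ⟨a', by simp [(T.diag_adj _ _ _ _ hd).1], ?_⟩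
        have hnd : ¬ T.diag (a,b) (a',b') :=
          (T.diag_iff_not (T.diag_adj _ _ _ _ hd).1 hb).mp hd
        simp [hnd]
    · rintro ⟨a', ha', rfl⟩
      by_cases hd : T.diag (a,b) (a',b')
      · exact Or.inl ⟨a', hd, by simp [hd]⟩
      · exact Or.inr ⟨a', (T.diag_iff_not ha' hb).mpr hd, by simp [hd]⟩
  have hinj : ∀ x ∈ N, ∀ y ∈ N,
      (fun a' => if T.diag (a,b) (a',b') then ((a',b') : VG × VH) else (a',b)) x =
      (fun a' => if T.diag (a,b) (a',b') then ((a',b') : VG × VH) else (a',b)) y → x = y := by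
    intro x _ y _ hxy
    simp only at hxy
    split_ifs at hxy <;> exact congrArg Prod.fst hxy
  have hsum : (∑ w ∈ Finset.univ.filter (fun w => T.IsFace (a,b) (a,b') w), φ w)
      = ∑ a' ∈ N, (if T.diag (a,b) (a',b') then φ (a',b') else φ (a',b)) := by
    rw [hface, Finset.sum_image hinj]
    exact Finset.sum_congr rfl fun a' _ => by split_ifs <;> rfl
  -- alpha at (a,b)
  have hα1 : T.alpha (a,b) (a,b') (a,b)
      = ((N.filter (fun a' => ¬ T.diag (a,b) (a',b'))).card : ℤ) := by
    rw [TriProd.alpha, if_pos (Or.inl rfl), if_neg hndiag]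
    congr 1
    have : Finset.univ.filter (fun w => T.IsFaceAvoiding (a,b) (a,b') w (a,b))
        = (N.filter (fun a' => ¬ T.diag (a,b) (a',b'))).image (fun a' => ((a',b) : VG × VH)) := by
      ext w
      simp only [Finset.mem_filter, Finset.mem_univ, true_and, Finset.mem_image,
        isFaceAvoiding_vert_iff T hb, hN]
      constructor
      · rintro (⟨a', hd, rfl, hx1, hx2⟩ | ⟨a', hd, rfl, hx1, hx2⟩)
        · exact absurd rfl hx1
        · exact ⟨a', ⟨(T.diag_adj _ _ _ _ hd).1,
            (T.diag_iff_not (T.diag_adj _ _ _ _ hd).1 hb).mp hd⟩, rfl⟩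
      · rintro ⟨a', ⟨ha', hnd⟩, rfl⟩
        refine Or.inr ⟨a', (T.diag_iff_not ha' hb).mpr hnd, rfl, ?_, ?_⟩
        · intro h; exact hbb' (congrArg Prod.snd h)
        · intro h; exact ha'.ne (congrArg Prod.fst h)
    rw [this, Finset.card_image_of_injective _ (fun x y h => congrArg Prod.fst h)]
  -- alpha at (a,b')
  have hα2 : T.alpha (a,b) (a,b') (a,b')
      = ((N.filter (fun a' => T.diag (a,b) (a',b'))).card : ℤ) := by
    rw [TriProd.alpha, if_pos (Or.inr rfl), if_neg hndiag]
    congr 1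
    have : Finset.univ.filter (fun w => T.IsFaceAvoiding (a,b) (a,b') w (a,b'))
        = (N.filter (fun a' => T.diag (a,b) (a',b'))).image (fun a' => ((a',b') : VG × VH)) := by
      ext w
      simp only [Finset.mem_filter, Finset.mem_univ, true_and, Finset.mem_image,
        isFaceAvoiding_vert_iff T hb, hN]
      constructor
      · rintro (⟨a', hd, rfl, hx1, hx2⟩ | ⟨a', hd, rfl, hx1, hx2⟩)
        · exact ⟨a', ⟨(T.diag_adj _ _ _ _ hd).1, hd⟩, rfl⟩
        · exact absurd rfl hx1
      · rintro ⟨a', ⟨ha', hd⟩, rfl⟩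
        refine Or.inl ⟨a', hd, rfl, ?_, ?_⟩
        · intro h; exact hbb' (congrArg Prod.snd h).symm
        · intro h; exact ha'.ne (congrArg Prod.fst h)
    rw [this, Finset.card_image_of_injective _ (fun x y h => congrArg Prod.fst h)]
  rw [TriProd.Div, hsum, hα1, hα2]
  have c1 : ((N.filter (fun a' => ¬ T.diag (a,b) (a',b'))).card : ℤ) * φ (a,b)
      = ∑ a' ∈ N, (if T.diag (a,b) (a',b') then 0 else φ (a,b)) := by
    rw [Finset.sum_ite, Finset.sum_const, Finset.sum_const]
    simp [mul_comm]
  have c2 : ((N.filter (fun a' => T.diag (a,b) (a',b'))).card : ℤ) * φ (a,b')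
      = ∑ a' ∈ N, (if T.diag (a,b) (a',b') then φ (a,b') else 0) := by
    rw [Finset.sum_ite, Finset.sum_const, Finset.sum_const]
    simp [mul_comm]
  rw [c1, c2, ← Finset.sum_add_distrib, ← Finset.sum_sub_distrib]
  exact Finset.sum_congr rfl fun a' _ => by split_ifs <;> ring

lemma div_horiz (T : TriProd G H) (φ : VG × VH → ℤ) {a a' : VG} {b : VH} (ha : G.Adj a a') :
    T.Div φ (a,b) (a',b) =
      ∑ b' ∈ Finset.univ.filter (fun b' => H.Adj b b'),
        (if T.diag (a,b) (a',b') then φ (a',b') - φ (a',b) else φ (a,b') - φ (a,b)) := by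
  have haa' : a ≠ a' := ha.ne
  have hndiag : ¬ T.diag (a,b) (a',b) := fun h => (T.diag_adj _ _ _ _ h).2.ne rfl
  set N := Finset.univ.filter (fun b' => H.Adj b b') with hN
  have hface : Finset.univ.filter (fun w => T.IsFace (a,b) (a',b) w)
      = N.image (fun b' => if T.diag (a,b) (a',b') then ((a',b') : VG × VH) else (a,b')) := by
    ext w
    simp only [Finset.mem_filter, Finset.mem_univ, true_and, Finset.mem_image,
      isFace_horiz_iff T ha, hN]
    constructor
    · rintro (⟨b', hd, rfl⟩ | ⟨b', hd, rfl⟩)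
      · exact ⟨b', by simp [(T.diag_adj _ _ _ _ hd).2], by simp [hd]⟩
      · refine ⟨b', by simp [(T.diag_adj _ _ _ _ hd).2.symm], ?_⟩
        have hnd : ¬ T.diag (a,b) (a',b') :=
          (T.diag_iff_not ha (T.diag_adj _ _ _ _ hd).2.symm).mp hd
        simp [hnd]
    · rintro ⟨b', hb', rfl⟩
      by_cases hd : T.diag (a,b) (a',b')
      · exact Or.inl ⟨b', hd, by simp [hd]⟩
      · exact Or.inr ⟨b', (T.diag_iff_not ha hb').mpr hd, by simp [hd]⟩
  have hinj : ∀ x ∈ N, ∀ y ∈ N,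
      (fun b' => if T.diag (a,b) (a',b') then ((a',b') : VG × VH) else (a,b')) x =
      (fun b' => if T.diag (a,b) (a',b') then ((a',b') : VG × VH) else (a,b')) y → x = y := by
    intro x _ y _ hxy
    simp only at hxy
    split_ifs at hxy <;> exact congrArg Prod.snd hxy
  have hsum : (∑ w ∈ Finset.univ.filter (fun w => T.IsFace (a,b) (a',b) w), φ w)
      = ∑ b' ∈ N, (if T.diag (a,b) (a',b') then φ (a',b') else φ (a,b')) := by
    rw [hface, Finset.sum_image hinj]
    exact Finset.sum_congr rfl fun b' _ => by split_ifs <;> rfl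
  have hα1 : T.alpha (a,b) (a',b) (a,b)
      = ((N.filter (fun b' => ¬ T.diag (a,b) (a',b'))).card : ℤ) := by
    rw [TriProd.alpha, if_pos (Or.inl rfl), if_neg hndiag]
    congr 1
    have : Finset.univ.filter (fun w => T.IsFaceAvoiding (a,b) (a',b) w (a,b))
        = (N.filter (fun b' => ¬ T.diag (a,b) (a',b'))).image (fun b' => ((a,b') : VG × VH)) := by
      ext w
      simp only [Finset.mem_filter, Finset.mem_univ, true_and, Finset.mem_image,
        isFaceAvoiding_horiz_iff T ha, hN]
      constructor
      · rintro (⟨b', hd, rfl, hx1, hx2⟩ | ⟨b', hd, rfl, hx1, hx2⟩)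
        · exact absurd rfl hx1
        · exact ⟨b', ⟨(T.diag_adj _ _ _ _ hd).2.symm,
            (T.diag_iff_not ha (T.diag_adj _ _ _ _ hd).2.symm).mp hd⟩, rfl⟩
      · rintro ⟨b', ⟨hb', hnd⟩, rfl⟩
        refine Or.inr ⟨b', (T.diag_iff_not ha hb').mpr hnd, rfl, ?_, ?_⟩
        · intro h; exact hb'.ne (congrArg Prod.snd h)
        · intro h; exact haa' (congrArg Prod.fst h)
    rw [this, Finset.card_image_of_injective _ (fun x y h => congrArg Prod.snd h)]
  have hα2 : T.alpha (a,b) (a',b) (a',b)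
      = ((N.filter (fun b' => T.diag (a,b) (a',b'))).card : ℤ) := by
    rw [TriProd.alpha, if_pos (Or.inr rfl), if_neg hndiag]
    congr 1
    have : Finset.univ.filter (fun w => T.IsFaceAvoiding (a,b) (a',b) w (a',b))
        = (N.filter (fun b' => T.diag (a,b) (a',b'))).image (fun b' => ((a',b') : VG × VH)) := by
      ext w
      simp only [Finset.mem_filter, Finset.mem_univ, true_and, Finset.mem_image,
        isFaceAvoiding_horiz_iff T ha, hN]
      constructor
      · rintro (⟨b', hd, rfl, hx1, hx2⟩ | ⟨b', hd, rfl, hx1, hx2⟩)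
        · exact ⟨b', ⟨(T.diag_adj _ _ _ _ hd).2, hd⟩, rfl⟩
        · exact absurd rfl hx2
      · rintro ⟨b', ⟨hb', hd⟩, rfl⟩
        refine Or.inl ⟨b', hd, rfl, ?_, ?_⟩
        · intro h; exact haa' (congrArg Prod.fst h).symm
        · intro h; exact hb'.ne (congrArg Prod.snd h)
    rw [this, Finset.card_image_of_injective _ (fun x y h => congrArg Prod.snd h)]
  rw [TriProd.Div, hsum, hα1, hα2]
  have c1 : ((N.filter (fun b' => ¬ T.diag (a,b) (a',b'))).card : ℤ) * φ (a,b)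
      = ∑ b' ∈ N, (if T.diag (a,b) (a',b') then 0 else φ (a,b)) := by
    rw [Finset.sum_ite, Finset.sum_const, Finset.sum_const]
    simp [mul_comm]
  have c2 : ((N.filter (fun b' => T.diag (a,b) (a',b'))).card : ℤ) * φ (a',b)
      = ∑ b' ∈ N, (if T.diag (a,b) (a',b') then φ (a',b) else 0) := by
    rw [Finset.sum_ite, Finset.sum_const, Finset.sum_const]
    simp [mul_comm]
  rw [c1, c2, ← Finset.sum_add_distrib, ← Finset.sum_sub_distrib]
  exact Finset.sum_congr rfl fun b' _ => by split_ifs <;> ring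

lemma exists_adj_of_connected {V : Type*} {G : SimpleGraph V} (hG : G.Connected)
    {p q : V} (hpq : G.Adj p q) (a : V) : ∃ a', G.Adj a a' := by
  obtain ⟨w⟩ := hG.preconnected a p
  cases w with
  | nil => exact ⟨q, hpq⟩
  | cons h _ => exact ⟨_, h⟩

lemma walk_const {V : Type*} {G : SimpleGraph V} (W : V → V → ℤ)
    (hsym : ∀ b b', G.Adj b b' → W b b' = W b' b)
    (hloc : ∀ b b' b'', G.Adj b b' → G.Adj b b'' → W b b' = W b b'')
    {b c : V} (w : G.Walk b c) :
    ∀ b' c', G.Adj b b' → G.Adj c c' → W b b' = W c c' := by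
  induction w with
  | nil => intro b' c' h1 h2; exact hloc _ _ _ h1 h2
  | @cons u v _ h p ih =>
      intro b' c' h1 h2
      calc W u b' = W u v := hloc _ _ _ h1 h
        _ = W v u := hsym _ _ h
        _ = W _ c' := ih _ _ h.symm h2

lemma vert_local (T : TriProd G H) {P : VG × VH → VG × VH → ℤ} (hC : T.Cartier P)
    (hz : ∀ u v, T.diag u v → P u v = 0) (a : VG) (b : VH) :
    ∃ L : ℤ, ∀ b', H.Adj b b' → P (a,b) (a,b') = L := by
  obtain ⟨φ, hφ⟩ := hC (a,b)
  refine ⟨∑ a' ∈ Finset.univ.filter (fun a' => G.Adj a a'), (φ (a',b) - φ (a,b)), ?_⟩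
  intro b' hb'
  have hadj : T.Adj (a,b) (a,b') := Or.inr (Or.inl ⟨rfl, hb'⟩)
  rw [hφ _ _ hadj (Or.inl rfl), div_vert T φ hb']
  refine Finset.sum_congr rfl fun a' _ => ?_
  by_cases hd : T.diag (a,b) (a',b')
  · rw [if_pos hd]
    have hadj2 : T.Adj (a,b) (a',b') := Or.inr (Or.inr hd)
    have h0 : (0:ℤ) = T.Div φ (a,b) (a',b') := by
      rw [← hz _ _ hd]; exact hφ _ _ hadj2 (Or.inl rfl)
    rw [div_diag T φ hd] at h0
    omega
  · rw [if_neg hd]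

lemma horiz_local (T : TriProd G H) {P : VG × VH → VG × VH → ℤ} (hC : T.Cartier P)
    (hz : ∀ u v, T.diag u v → P u v = 0) (a : VG) (b : VH) :
    ∃ L : ℤ, ∀ a', G.Adj a a' → P (a,b) (a',b) = L := by
  obtain ⟨φ, hφ⟩ := hC (a,b)
  refine ⟨∑ b' ∈ Finset.univ.filter (fun b' => H.Adj b b'), (φ (a,b') - φ (a,b)), ?_⟩
  intro a' ha'
  have hadj : T.Adj (a,b) (a',b) := Or.inl ⟨rfl, ha'⟩
  rw [hφ _ _ hadj (Or.inl rfl), div_horiz T φ ha']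
  refine Finset.sum_congr rfl fun b' _ => ?_
  by_cases hd : T.diag (a,b) (a',b')
  · rw [if_pos hd]
    have hadj2 : T.Adj (a,b) (a',b') := Or.inr (Or.inr hd)
    have h0 : (0:ℤ) = T.Div φ (a,b) (a',b') := by
      rw [← hz _ _ hd]; exact hφ _ _ hadj2 (Or.inl rfl)
    rw [div_diag T φ hd] at h0
    omega
  · rw [if_neg hd]

end AuxLemmas


/-- A divisor `P` on the triangulated product `Δ` lies in the image of
`β` if and only if `P` is Cartier and `P` vanishes on every diagonal edge of `Δ`. -/
theorem mem_image_beta_iff {VG VH : Type*} [Fintype VG] [Fintype VH]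
    (G : SimpleGraph VG) (H : SimpleGraph VH)
    (hG : G.Connected) (hH : H.Connected)
    (hGe : ∃ a a', G.Adj a a') (hHe : ∃ b b', H.Adj b b')
    (T : TriProd G H)
    (P : VG × VH → VG × VH → ℤ) (hsymm : ∀ u v, P u v = P v u) :
    (∃ (C : VG → ℤ) (D : VH → ℤ), ∀ u v, T.Adj u v → P u v = beta C D u v) ↔
      (T.Cartier P ∧ ∀ u v, T.diag u v → P u v = 0) := by
  constructor
  · rintro ⟨C, D, hP⟩
    obtain ⟨a0, a1, hGa⟩ := hGe
    obtain ⟨b0, b1, hHb⟩ := hHe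
    constructor
    · -- Cartier
      rintro ⟨xa, xb⟩
      obtain ⟨aN, haN⟩ := exists_adj_of_connected hG hGa xa
      obtain ⟨bN, hbN⟩ := exists_adj_of_connected hH hHb xb
      set f : VG → ℤ := fun s => if s = aN then C xa else 0 with hf
      set g : VH → ℤ := fun t => if t = bN then D xb else 0 with hg
      refine ⟨fun w => f w.1 + g w.2, ?_⟩
      rintro ⟨u1, u2⟩ ⟨v1, v2⟩ hadj hx
      rw [hP _ _ hadj]
      rcases hadj with ⟨h2, hGadj⟩ | ⟨h1, hHadj⟩ | hd
      · -- horizontal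
        simp only at h2
        subst h2
        have hxb : xb = u2 := by
          rcases hx with h | h <;> (injection h with e1 e2) <;> exact e2
        subst hxb
        rw [div_horiz T _ hGadj]
        have hterm : ∀ b' ∈ Finset.univ.filter (fun b' => H.Adj xb b'),
            (if T.diag (u1,xb) (v1,b')
              then (fun w => f w.1 + g w.2) ((v1:VG),(b':VH)) - (fun w => f w.1 + g w.2) (v1,xb)
              else (fun w => f w.1 + g w.2) (u1,b') - (fun w => f w.1 + g w.2) (u1,xb))
            = g b' - g xb := by
          intro b' _
          by_cases h : T.diag (u1,xb) (v1,b')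
          · rw [if_pos h]
            show f v1 + g b' - (f v1 + g xb) = g b' - g xb
            ring
          · rw [if_neg h]
            show f u1 + g b' - (f u1 + g xb) = g b' - g xb
            ring
        rw [Finset.sum_congr rfl hterm, Finset.sum_sub_distrib, Finset.sum_const]
        have hgxb : g xb = 0 := if_neg hbN.ne
        have hsumg : ∑ b' ∈ Finset.univ.filter (fun b' => H.Adj xb b'), g b' = D xb := by
          simp only [hg]
          rw [Finset.sum_ite_eq' _ bN (fun _ => D xb), if_pos (by simp [hbN])]
        rw [hgxb, smul_zero, sub_zero, hsumg, beta]
        rw [if_neg (by exact hGadj.ne), if_pos rfl]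
      · -- vertical
        simp only at h1
        subst h1
        have hxa : xa = u1 := by
          rcases hx with h | h <;> (injection h with e1 e2) <;> exact e1
        subst hxa
        rw [div_vert T _ hHadj]
        have hterm : ∀ a' ∈ Finset.univ.filter (fun a' => G.Adj xa a'),
            (if T.diag (xa,u2) (a',v2)
              then (fun w => f w.1 + g w.2) ((a':VG),(v2:VH)) - (fun w => f w.1 + g w.2) (xa,v2)
              else (fun w => f w.1 + g w.2) (a',u2) - (fun w => f w.1 + g w.2) (xa,u2))
            = f a' - f xa := by
          intro a' _
          by_cases h : T.diag (xa,u2) (a',v2)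
          · rw [if_pos h]
            show f a' + g v2 - (f xa + g v2) = f a' - f xa
            ring
          · rw [if_neg h]
            show f a' + g u2 - (f xa + g u2) = f a' - f xa
            ring
        rw [Finset.sum_congr rfl hterm, Finset.sum_sub_distrib, Finset.sum_const]
        have hfxa : f xa = 0 := if_neg haN.ne
        have hsumf : ∑ a' ∈ Finset.univ.filter (fun a' => G.Adj xa a'), f a' = C xa := by
          simp only [hf]
          rw [Finset.sum_ite_eq' _ aN (fun _ => C xa), if_pos (by simp [haN])]
        rw [hfxa, smul_zero, sub_zero, hsumf, beta]
        rw [if_pos rfl]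
      · -- diagonal
        rw [div_diag T _ hd]
        have h1 := (T.diag_ne hd).1
        have h2 := (T.diag_ne hd).2
        simp only at h1 h2
        rw [beta, if_neg h1, if_neg h2]
        show (0:ℤ) = f v1 + g u2 + (f u1 + g v2) - (f u1 + g u2 + (f v1 + g v2))
        ring
    · -- zero on diagonals
      intro u v hd
      rw [hP u v (Or.inr (Or.inr hd))]
      rw [beta, if_neg (T.diag_ne hd).1, if_neg (T.diag_ne hd).2]
  · rintro ⟨hC, hz⟩
    obtain ⟨a0, a1, hGa⟩ := hGe
    obtain ⟨b0, b1, hHb⟩ := hHe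
    refine ⟨fun a => P (a, b0) (a, b1), fun b => P (a0, b) (a1, b), ?_⟩
    rintro ⟨u1, u2⟩ ⟨v1, v2⟩ hadj
    rcases hadj with ⟨h2, hGadj⟩ | ⟨h1, hHadj⟩ | hd
    · -- horizontal
      simp only at h2
      subst h2
      rw [beta, if_neg (by exact hGadj.ne), if_pos rfl]
      obtain ⟨w⟩ := hG.preconnected u1 a0
      exact walk_const (fun p q => P (p, u2) (q, u2))
        (fun p q _ => hsymm _ _)
        (fun p q r hq hr => by
          obtain ⟨L, hL⟩ := horiz_local T hC hz p u2
          show P (p, u2) (q, u2) = P (p, u2) (r, u2)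
          rw [hL q hq, hL r hr])
        w v1 a1 hGadj hGa
    · -- vertical
      simp only at h1
      subst h1
      rw [beta, if_pos rfl]
      obtain ⟨w⟩ := hH.preconnected u2 b0
      exact walk_const (fun p q => P (u1, p) (u1, q))
        (fun p q _ => hsymm _ _)
        (fun p q r hq hr => by
          obtain ⟨L, hL⟩ := vert_local T hC hz u1 p
          show P (u1, p) (u1, q) = P (u1, p) (u1, r)
          rw [hL q hq, hL r hr])
        w v2 b1 hHadj hHb
    · -- diagonal
      rw [hz _ _ hd, beta, if_neg (T.diag_ne hd).1, if_neg (T.diag_ne hd).2]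
end

section
/- Let G and H be finite connected simple graphs. The ℚ-vector space of functions φ: V(G)×V(H)→ℚ satisfying φ(a,b) + φ(a',b') = φ(a,b') + φ(a',b) for every edge aa' of G and every edge bb' of H has dimension at most |V(G)| + |V(H)| − 1. -/
open scoped Classical
open Finset

/-- The ℚ-vector space of functions `φ : V(G) × V(H) → ℚ` satisfying
`φ(a,b) + φ(a',b') = φ(a,b') + φ(a',b)` for every edge `aa'` of `G` and
every edge `bb'` of `H`. -/
def squareRelationSpace {VG VH : Type*} (G : SimpleGraph VG) (H : SimpleGraph VH) :
    Submodule ℚ ((VG × VH) → ℚ) where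
  carrier := {φ | ∀ a a' b b', G.Adj a a' → H.Adj b b' →
    φ (a, b) + φ (a', b') = φ (a, b') + φ (a', b)}
  add_mem' := by
    intro f g hf hg a a' b b' h1 h2
    have h3 := hf a a' b b' h1 h2
    have h4 := hg a a' b b' h1 h2
    simp only [Pi.add_apply]
    linarith
  zero_mem' := by
    intro a a' b b' _ _
    simp
  smul_mem' := by
    intro c f hf a a' b b' h1 h2
    have h3 := hf a a' b b' h1 h2
    simp only [Pi.smul_apply, smul_eq_mul]
    rw [← mul_add, ← mul_add, h3]

lemma squareRelation_global {VG VH : Type*} {G : SimpleGraph VG} {H : SimpleGraph VH}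
    (hG : G.Preconnected) (hH : H.Preconnected) {φ : VG × VH → ℚ}
    (hφ : ∀ a a' b b', G.Adj a a' → H.Adj b b' →
      φ (a, b) + φ (a', b') = φ (a, b') + φ (a', b)) :
    ∀ a a' b b', φ (a, b) + φ (a', b') = φ (a, b') + φ (a', b) := by
  have step1 : ∀ b b', H.Adj b b' → ∀ a a',
      φ (a, b) - φ (a, b') = φ (a', b) - φ (a', b') := by
    intro b b' hbb' a a'
    obtain ⟨p⟩ := hG a a'
    induction p with
    | nil => rfl
    | cons h p ih =>
      have := hφ _ _ _ _ h hbb'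
      linarith
  intro a a' b b'
  have step2 : φ (a, b) - φ (a', b) = φ (a, b') - φ (a', b') := by
    obtain ⟨p⟩ := hH b b'
    induction p with
    | nil => rfl
    | cons h p ih =>
      have := step1 _ _ h a a'
      linarith
  linarith

/-- For finite connected simple graphs `G` and `H`, the ℚ-vector space
of functions `φ : V(G) × V(H) → ℚ` with `φ(a,b) + φ(a',b') = φ(a,b') + φ(a',b)` for all
edges `aa'` of `G` and `bb'` of `H` has dimension at most `|V(G)| + |V(H)| − 1`. -/
theorem squareRelationSpace_finrank_le {VG VH : Type*} [Fintype VG] [Fintype VH]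
    (G : SimpleGraph VG) (H : SimpleGraph VH)
    (hG : G.Connected) (hH : H.Connected) :
    Module.finrank ℚ (squareRelationSpace G H) ≤
      Fintype.card VG + Fintype.card VH - 1 := by
  have hVG : Nonempty VG := hG.nonempty
  have hVH : Nonempty VH := hH.nonempty
  obtain ⟨a0⟩ := hVG
  obtain ⟨b0⟩ := hVH
  haveI : Nonempty VG := ⟨a0⟩
  haveI : Nonempty VH := ⟨b0⟩
  set pr : (VH → ℚ) →ₗ[ℚ] ℚ := LinearMap.proj b0 with hpr
  set K := LinearMap.ker pr with hK
  let L : (squareRelationSpace G H) →ₗ[ℚ] (VG → ℚ) × K :=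
    { toFun := fun φ => ((fun a => (φ : (VG × VH) → ℚ) (a, b0)),
        ⟨fun b => (φ : (VG × VH) → ℚ) (a0, b) - (φ : (VG × VH) → ℚ) (a0, b0), by
          simp [hK, LinearMap.mem_ker, hpr]⟩)
      map_add' := by
        intro f g
        refine Prod.ext ?_ (Subtype.ext ?_) <;> funext x <;>
          simp only [Submodule.coe_add, Pi.add_apply, Prod.fst_add, Prod.snd_add,
            Submodule.coe_add] <;> ring
      map_smul' := by
        intro c f
        refine Prod.ext ?_ (Subtype.ext ?_) <;> funext x <;>
          simp only [Submodule.coe_smul, Pi.smul_apply, Prod.smul_fst, Prod.smul_snd,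
            SetLike.val_smul, smul_eq_mul, RingHom.id_apply] <;> ring }
  have hinj : Function.Injective L := by
    rw [injective_iff_map_eq_zero]
    intro φ hφ0
    have h1 : ∀ a, (φ : (VG × VH) → ℚ) (a, b0) = 0 := fun a =>
      congrFun (congrArg Prod.fst hφ0) a
    have h2 : ∀ b, (φ : (VG × VH) → ℚ) (a0, b) - (φ : (VG × VH) → ℚ) (a0, b0) = 0 :=
      fun b => congrFun (congrArg (fun p => (p.2 : VH → ℚ)) hφ0) b
    have hrel := squareRelation_global hG.preconnected hH.preconnected φ.2
    ext ⟨a, b⟩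
    have h3 := hrel a a0 b b0
    have := h1 a; have := h1 a0; have := h2 b
    simpa using by linarith
  have hle := LinearMap.finrank_le_finrank_of_injective hinj
  have hKrank : Module.finrank ℚ K = Fintype.card VH - 1 := by
    have hsurj : Function.Surjective pr := fun c => ⟨fun _ => c, rfl⟩
    have := LinearMap.finrank_range_add_finrank_ker pr
    rw [LinearMap.range_eq_top.mpr hsurj, finrank_top] at this
    simp only [Module.finrank_self, Module.finrank_fintype_fun_eq_card] at this
    rw [hK]
    omega
  have hcard : 1 ≤ Fintype.card VH := Fintype.card_pos
  rw [Module.finrank_prod, Module.finrank_fintype_fun_eq_card, hKrank] at hle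
  omega
end

section
/- Let G be a finite connected simple graph with at least one edge, let H = K₂ be the complete graph on two vertices w₁, w₂, and let Δ be a triangulated product of G and H. Then every Cartier divisor D on Δ can be written as D = D' + Σ_{v∈V(G)} k_v·Div(1_{(v,w₂)}), where each k_v ∈ ℤ, 1_{(v,w₂)} is the indicator function of the vertex (v,w₂), and D' is a Cartier divisor on Δ vanishing on every diagonal edge of Δ. -/
open scoped Classical
open Finset

section Aux
set_option linter.unusedSectionVars false

open Finset

variable {VG : Type*} [Fintype VG] {G : SimpleGraph VG}
variable (T : TriProd G (⊤ : SimpleGraph Bool))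

lemma TP.swap12 {α : Type*} [DecidableEq α] (u v w : α) :
    ({u, v, w} : Finset α) = {v, u, w} := by
  ext z
  simp only [Finset.mem_insert, Finset.mem_singleton]
  tauto

lemma TP.adj_symm {u v : VG × Bool} (h : T.Adj u v) : T.Adj v u := by
  rcases h with ⟨h1, h2⟩ | ⟨h1, h2⟩ | h
  · exact Or.inl ⟨h1.symm, h2.symm⟩
  · exact Or.inr (Or.inl ⟨h1.symm, h2.symm⟩)
  · exact Or.inr (Or.inr (T.diag_symm _ _ h))

lemma TP.isFace_comm (u v w : VG × Bool) : T.IsFace u v w ↔ T.IsFace v u w := by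
  unfold TriProd.IsFace
  constructor <;> rintro ⟨a, a', b, b', hd, hs⟩ <;>
    refine ⟨a, a', b, b', hd, ?_⟩ <;> rw [Finset.ext_iff] at hs ⊢ <;> intro z <;>
    have h := hs z <;>
    simp only [Finset.mem_insert, Finset.mem_singleton] at h ⊢ <;> tauto

lemma TP.isFaceAvoiding_comm (u v w x : VG × Bool) :
    T.IsFaceAvoiding u v w x ↔ T.IsFaceAvoiding v u w x := by
  unfold TriProd.IsFaceAvoiding
  constructor <;> rintro ⟨a, a', b, b', hd, hs, h1, h2⟩ <;>
    refine ⟨a, a', b, b', hd, ?_, h1, h2⟩ <;> rw [Finset.ext_iff] at hs ⊢ <;> intro z <;>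
    have h := hs z <;>
    simp only [Finset.mem_insert, Finset.mem_singleton] at h ⊢ <;> tauto

lemma TP.alpha_comm (u v x : VG × Bool) : T.alpha u v x = T.alpha v u x := by
  unfold TriProd.alpha
  by_cases h : x = u ∨ x = v
  · rw [if_pos h, if_pos (Or.symm h)]
    by_cases hd : T.diag u v
    · rw [if_pos hd, if_pos (T.diag_symm _ _ hd)]
    · rw [if_neg hd, if_neg (fun h' => hd (T.diag_symm _ _ h'))]
      congr 1
      apply congrArg
      apply Finset.filter_congr
      intro w _
      simp [TP.isFaceAvoiding_comm]
  · rw [if_neg h, if_neg (fun h' => h (Or.symm h'))]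

lemma TP.div_comm (ψ : VG × Bool → ℤ) (u v : VG × Bool) :
    T.Div ψ u v = T.Div ψ v u := by
  unfold TriProd.Div
  rw [TP.alpha_comm T u v u, TP.alpha_comm T u v v]
  have hf : Finset.univ.filter (fun w => T.IsFace u v w)
      = Finset.univ.filter (fun w => T.IsFace v u w) := by
    apply Finset.filter_congr
    intro w _
    simp [TP.isFace_comm]
  rw [hf]
  ring

lemma TP.div_sub (ψ φ : VG × Bool → ℤ) (u v : VG × Bool) :
    T.Div (fun p => ψ p - φ p) u v = T.Div ψ u v - T.Div φ u v := by
  unfold TriProd.Div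
  rw [Finset.sum_sub_distrib]
  ring

lemma TP.div_linear (k : VG → ℤ) (f : VG → VG × Bool → ℤ) (u v : VG × Bool) :
    ∑ x : VG, k x * T.Div (f x) u v = T.Div (fun p => ∑ x : VG, k x * f x p) u v := by
  unfold TriProd.Div
  rw [Finset.sum_comm]
  simp only [mul_sub, mul_add, Finset.mul_sum, Finset.sum_sub_distrib, Finset.sum_add_distrib,
    mul_left_comm]

lemma TP.not_diag_rev {a a' : VG} (hd : T.diag (a, false) (a', true)) :
    ¬ T.diag (a', false) (a, true) := by
  rcases T.diag_choice a a' false true ((T.diag_adj _ _ _ _ hd).1) (by simp)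
    with ⟨h1, h2⟩ | ⟨h1, h2⟩
  · exact fun h => h2 (T.diag_symm _ _ h)
  · exact absurd hd h1

lemma TP.not_diag_horiz (a a' : VG) (b : Bool) : ¬ T.diag (a, b) (a', b) := by
  intro h
  simpa using (T.diag_adj _ _ _ _ h).2

lemma TP.repr_diag {a a' c c' : VG} {d d' : Bool} {w : VG × Bool}
    (hd : T.diag (a, false) (a', true)) (hdg : T.diag (c, d) (c', d'))
    (hset : ∀ z : VG × Bool, (z = (a, false) ∨ z = (a', true) ∨ z = w) ↔
      (z = (c, d) ∨ z = (c', d') ∨ z = (c', d))) :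
    (c = a ∧ c' = a' ∧ d = false ∧ d' = true ∧ w = (a', false)) ∨
    (c = a' ∧ c' = a ∧ d = true ∧ d' = false ∧ w = (a, true)) := by
  have hane : a ≠ a' := ((T.diag_adj _ _ _ _ hd).1).ne
  have hdd' : d ≠ d' := by simpa using (T.diag_adj _ _ _ _ hdg).2
  cases d <;> cases d'
  · exact absurd rfl hdd'
  · -- d = false, d' = true
    have h2 := (hset (a', true)).1 (Or.inr (Or.inl rfl))
    simp at h2
    subst h2
    have h1 := (hset (a, false)).1 (Or.inl rfl)
    simp at h1
    have h1' : a = c := by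
      rcases h1 with h | h
      · exact h
      · exact absurd h hane
    subst h1'
    have h5 := (hset (a', false)).2 (Or.inr (Or.inr rfl))
    simp [Ne.symm hane] at h5
    exact Or.inl ⟨rfl, rfl, rfl, rfl, h5.symm⟩
  · -- d = true, d' = false
    have h1 := (hset (a, false)).1 (Or.inl rfl)
    simp at h1
    subst h1
    have h2 := (hset (a', true)).1 (Or.inr (Or.inl rfl))
    simp at h2
    have h2' : a' = c := by
      rcases h2 with h | h
      · exact h
      · exact absurd h.symm hane
    subst h2'
    have h5 := (hset (a, true)).2 (Or.inr (Or.inr rfl))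
    simp [hane] at h5
    exact Or.inr ⟨rfl, rfl, rfl, rfl, h5.symm⟩
  · exact absurd rfl hdd'

lemma TP.repr_bottom {a a' c c' : VG} {d d' : Bool} {w : VG × Bool}
    (hd : T.diag (a, false) (a', true)) (hdg : T.diag (c, d) (c', d'))
    (hset : ∀ z : VG × Bool, (z = (a, false) ∨ z = (a', false) ∨ z = w) ↔
      (z = (c, d) ∨ z = (c', d') ∨ z = (c', d))) :
    c = a ∧ c' = a' ∧ d = false ∧ d' = true ∧ w = (a', true) := by
  have hane : a ≠ a' := ((T.diag_adj _ _ _ _ hd).1).ne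
  have hcc' : c ≠ c' := ((T.diag_adj _ _ _ _ hdg).1).ne
  have hdd' : d ≠ d' := by simpa using (T.diag_adj _ _ _ _ hdg).2
  cases d <;> cases d'
  · exact absurd rfl hdd'
  · -- d = false, d' = true
    have h4 := (hset (c', true)).2 (Or.inr (Or.inl rfl))
    simp at h4
    subst h4
    have h3 := (hset (c, false)).2 (Or.inl rfl)
    simp at h3
    have h5 := (hset (c', false)).2 (Or.inr (Or.inr rfl))
    simp at h5
    rcases h3 with rfl | rfl
    · rcases h5 with rfl | rfl
      · exact absurd rfl hcc'
      · exact ⟨rfl, rfl, rfl, rfl, rfl⟩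
    · rcases h5 with rfl | rfl
      · exact absurd hdg (TP.not_diag_rev T hd)
      · exact absurd rfl hcc'
  · -- d = true, d' = false
    have h1 := (hset (a, false)).1 (Or.inl rfl)
    simp at h1
    have h2 := (hset (a', false)).1 (Or.inr (Or.inl rfl))
    simp at h2
    exact absurd (h1.trans h2.symm) hane
  · exact absurd rfl hdd'

lemma TP.diag_faces {a a' : VG} (hd : T.diag (a, false) (a', true)) :
    Finset.univ.filter (fun w => T.IsFace (a, false) (a', true) w)
      = {(a', false), (a, true)} := by
  ext w
  simp only [Finset.mem_filter, Finset.mem_univ, true_and, Finset.mem_insert,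
    Finset.mem_singleton]
  constructor
  · rintro ⟨c, c', d, d', hdg, hset⟩
    rw [Finset.ext_iff] at hset
    simp only [Finset.mem_insert, Finset.mem_singleton] at hset
    rcases TP.repr_diag T hd hdg hset with ⟨-, -, -, -, hw⟩ | ⟨-, -, -, -, hw⟩
    · exact Or.inl hw
    · exact Or.inr hw
  · rintro (rfl | rfl)
    · exact ⟨a, a', false, true, hd, rfl⟩
    · refine ⟨a', a, true, false, T.diag_symm _ _ hd, ?_⟩
      rw [Finset.ext_iff]
      intro z
      simp only [Finset.mem_insert, Finset.mem_singleton]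
      tauto

lemma TP.bottom_faces {a a' : VG} (hd : T.diag (a, false) (a', true)) :
    Finset.univ.filter (fun w => T.IsFace (a, false) (a', false) w) = {(a', true)} := by
  ext w
  simp only [Finset.mem_filter, Finset.mem_univ, true_and, Finset.mem_singleton]
  constructor
  · rintro ⟨c, c', d, d', hdg, hset⟩
    rw [Finset.ext_iff] at hset
    simp only [Finset.mem_insert, Finset.mem_singleton] at hset
    exact (TP.repr_bottom T hd hdg hset).2.2.2.2
  · rintro rfl
    refine ⟨a, a', false, true, hd, ?_⟩
    rw [Finset.ext_iff]
    intro z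
    simp only [Finset.mem_insert, Finset.mem_singleton]
    tauto

lemma TP.alpha_diag_left {a a' : VG} (hd : T.diag (a, false) (a', true)) :
    T.alpha (a, false) (a', true) (a, false) = 1 := by
  unfold TriProd.alpha
  rw [if_pos (Or.inl rfl), if_pos hd]

lemma TP.alpha_diag_right {a a' : VG} (hd : T.diag (a, false) (a', true)) :
    T.alpha (a, false) (a', true) (a', true) = 1 := by
  unfold TriProd.alpha
  rw [if_pos (Or.inr rfl), if_pos hd]

lemma TP.alpha_bottom_left {a a' : VG} (hd : T.diag (a, false) (a', true)) :
    T.alpha (a, false) (a', false) (a, false) = 0 := by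
  unfold TriProd.alpha
  rw [if_pos (Or.inl rfl), if_neg (TP.not_diag_horiz T a a' false)]
  have he : Finset.univ.filter
      (fun w => T.IsFaceAvoiding (a, false) (a', false) w (a, false)) = ∅ := by
    rw [Finset.eq_empty_iff_forall_notMem]
    intro w hw
    rw [Finset.mem_filter] at hw
    obtain ⟨-, c, c', d, d', hdg, hset, hx1, hx2⟩ := hw
    rw [Finset.ext_iff] at hset
    simp only [Finset.mem_insert, Finset.mem_singleton] at hset
    obtain ⟨rfl, rfl, rfl, rfl, rfl⟩ := TP.repr_bottom T hd hdg hset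
    exact hx1 rfl
  rw [he]
  simp

lemma TP.alpha_bottom_right {a a' : VG} (hd : T.diag (a, false) (a', true)) :
    T.alpha (a, false) (a', false) (a', false) = 1 := by
  have hane : a ≠ a' := ((T.diag_adj _ _ _ _ hd).1).ne
  unfold TriProd.alpha
  rw [if_pos (Or.inr rfl), if_neg (TP.not_diag_horiz T a a' false)]
  have he : Finset.univ.filter
      (fun w => T.IsFaceAvoiding (a, false) (a', false) w (a', false)) = {(a', true)} := by
    ext w
    simp only [Finset.mem_filter, Finset.mem_univ, true_and, Finset.mem_singleton]
    constructor
    · rintro ⟨c, c', d, d', hdg, hset, hx1, hx2⟩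
      rw [Finset.ext_iff] at hset
      simp only [Finset.mem_insert, Finset.mem_singleton] at hset
      exact (TP.repr_bottom T hd hdg hset).2.2.2.2
    · rintro rfl
      refine ⟨a, a', false, true, hd, ?_, ?_, ?_⟩
      · rw [Finset.ext_iff]
        intro z
        simp only [Finset.mem_insert, Finset.mem_singleton]
        tauto
      · simp [Prod.ext_iff, Ne.symm hane]
      · simp
  rw [he]
  simp

lemma TP.div_diag (ψ : VG × Bool → ℤ) {a a' : VG} (hd : T.diag (a, false) (a', true)) :
    T.Div ψ (a, false) (a', true)
      = ψ (a', false) + ψ (a, true) - ψ (a, false) - ψ (a', true) := by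
  unfold TriProd.Div
  rw [TP.diag_faces T hd, TP.alpha_diag_left T hd, TP.alpha_diag_right T hd,
    Finset.sum_pair (by simp : ((a', false) : VG × Bool) ≠ (a, true))]
  ring

lemma TP.div_bottom (ψ : VG × Bool → ℤ) {a a' : VG} (hd : T.diag (a, false) (a', true)) :
    T.Div ψ (a, false) (a', false) = ψ (a', true) - ψ (a', false) := by
  unfold TriProd.Div
  rw [TP.bottom_faces T hd, TP.alpha_bottom_left T hd, TP.alpha_bottom_right T hd,
    Finset.sum_singleton]
  ring

lemma TP.div_delta (k : VG → ℤ) (u v : VG × Bool) :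
    ∑ x : VG, k x * T.Div (fun p => if p = (x, true) then 1 else 0) u v
      = T.Div (fun p => ∑ x : VG, k x * (if p = (x, true) then 1 else 0)) u v :=
  TP.div_linear T k (fun x p => if p = (x, true) then 1 else 0) u v

end Aux

/-- Let `H = K₂` be the complete graph on the two vertices
`w₁ = false`, `w₂ = true`.  Every Cartier divisor `D` on a triangulated product `Δ`
of `G` and `K₂` can be written as `D = D' + Σ_{v ∈ V(G)} k_v · Div(1_{(v,w₂)})`
where `D'` is a Cartier divisor vanishing on every diagonal edge of `Δ`. -/
theorem cartier_decomposition_K2 {VG : Type*} [Fintype VG]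
    (G : SimpleGraph VG)
    (hG : G.Connected) (hGe : ∃ a a', G.Adj a a')
    (T : TriProd G (⊤ : SimpleGraph Bool))
    (D : VG × Bool → VG × Bool → ℤ) (hsymm : ∀ u v, D u v = D v u)
    (hD : T.Cartier D) :
    ∃ (k : VG → ℤ) (D' : VG × Bool → VG × Bool → ℤ),
      (∀ u v, D' u v = D' v u) ∧ T.Cartier D' ∧
      (∀ u v, T.diag u v → D' u v = 0) ∧
      (∀ u v, T.Adj u v →
        D u v = D' u v +
          ∑ x : VG, k x * T.Div (fun p => if p = (x, true) then 1 else 0) u v) := by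
  classical
  choose ψ0 hψ0 using hD
  set k : VG → ℤ := fun a => ψ0 (a, false) (a, true) - ψ0 (a, false) (a, false) with hkdef
  set φ : VG × Bool → ℤ := fun p => ∑ x : VG, k x * (if p = (x, true) then 1 else 0) with hφdef
  have hφf : ∀ c : VG, φ (c, false) = 0 := by
    intro c
    rw [hφdef]
    simp
  have hφt : ∀ c : VG, φ (c, true) = k c := by
    intro c
    rw [hφdef]
    simp
  have hkey : ∀ a a' : VG, T.diag (a, false) (a', true) →
      D (a, false) (a', true) = k a - k a' := by
    intro a a' hd
    have haa : G.Adj a a' := (T.diag_adj _ _ _ _ hd).1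
    have hAd : T.Adj (a, false) (a', true) := Or.inr (Or.inr hd)
    have hAb : T.Adj (a, false) (a', false) := Or.inl ⟨rfl, haa⟩
    have e1 := hψ0 (a, false) _ _ hAd (Or.inl rfl)
    rw [TP.div_diag T _ hd] at e1
    have e2 := hψ0 (a, false) _ _ hAb (Or.inl rfl)
    have e3 := hψ0 (a', false) _ _ hAb (Or.inr rfl)
    rw [TP.div_bottom T _ hd] at e2
    rw [TP.div_bottom T _ hd] at e3
    simp only [hkdef]
    omega
  have hdivφdiag : ∀ a a' : VG, T.diag (a, false) (a', true) →
      T.Div φ (a, false) (a', true) = k a - k a' := by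
    intro a a' hd
    rw [TP.div_diag T φ hd]
    simp only [hφf, hφt]
    ring
  have hdiagD : ∀ u v, T.diag u v → D u v = T.Div φ u v := by
    rintro ⟨a, b⟩ ⟨a', b'⟩ hd
    have hbb : b ≠ b' := by simpa using (T.diag_adj _ _ _ _ hd).2
    cases b <;> cases b'
    · exact absurd rfl hbb
    · rw [hkey a a' hd, hdivφdiag a a' hd]
    · have hd' : T.diag (a', false) (a, true) := T.diag_symm _ _ hd
      rw [hsymm (a, true) (a', false), hkey a' a hd', TP.div_comm T φ (a, true) (a', false),
        hdivφdiag a' a hd']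
    · exact absurd rfl hbb
  refine ⟨k, fun u v => if T.Adj u v then D u v - T.Div φ u v else 0, ?_, ?_, ?_, ?_⟩
  · intro u v
    dsimp only
    by_cases h : T.Adj u v
    · rw [if_pos h, if_pos (TP.adj_symm T h), hsymm u v, TP.div_comm T φ u v]
    · rw [if_neg h, if_neg (fun h' => h (TP.adj_symm T h'))]
  · intro x
    refine ⟨fun p => ψ0 x p - φ p, ?_⟩
    intro u v hadj hx
    dsimp only
    rw [if_pos hadj, TP.div_sub T (ψ0 x) φ u v, ← hψ0 x u v hadj hx]
  · intro u v hdg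
    have hA : T.Adj u v := Or.inr (Or.inr hdg)
    dsimp only
    rw [if_pos hA, hdiagD u v hdg, sub_self]
  · intro u v hadj
    dsimp only
    rw [if_pos hadj, TP.div_delta T k u v, ← hφdef]
    ring
end
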